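/- arXiv:1411.1096 — 5 statements merged into one kernel-verified Lean document; each statement's English description precedes it below -/
import Mathlib

section
/- Every Monk algebra obtained from E^{23}_q by splitting is a special extension of every subalgebra of E^{23}_q. -/
universe u v

/-- Non-associative relation algebras: Boolean algebras with a binary
relative multiplication `comp`, unary converse `conv`, and identity `ide`. -/
class NA (α : Type u) extends BooleanAlgebra α where
  comp : α → α → α
  conv : α → α
  ide : α
  comp_ide : ∀ x : α, comp x ide = x
  ide_comp : ∀ x : α, comp ide x = x
  conv_conv : ∀ x : α, conv (conv x) = x
  conv_sup : ∀ x y : α, conv (x ⊔ y) = conv x ⊔ conv y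
  comp_sup : ∀ x y z : α, comp x (y ⊔ z) = comp x y ⊔ comp x z
  sup_comp : ∀ x y z : α, comp (x ⊔ y) z = comp x z ⊔ comp y z
  peirce1 : ∀ x y z : α, comp x y ⊓ z = ⊥ ↔ comp (conv x) z ⊓ y = ⊥
  peirce2 : ∀ x y z : α, comp x y ⊓ z = ⊥ ↔ comp z (conv y) ⊓ x = ⊥

/-- Relation algebras: associative non-associative relation algebras. -/
class RA (α : Type u) extends NA α where
  comp_assoc : ∀ x y z : α, comp (comp x y) z = comp x (comp y z)

namespace NA

variable {α : Type u} [NA α]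

/-- The diversity element 0'. -/
def div : α := (ide : α)ᶜ

/-- Converse is the identity. -/
def Symmetric (α : Type u) [NA α] : Prop := ∀ x : α, conv x = x

/-- The identity 1' is an atom. -/
def Integral (α : Type u) [NA α] : Prop := IsAtom (ide : α)

/-- A diversity atom: an atom below 0'. -/
def DivAtom (x : α) : Prop := IsAtom x ∧ x ≤ (div : α)

/-- A subalgebra of a (non-associative) relation algebra. -/
structure Subalgebra (α : Type u) [NA α] where
  carrier : Set α
  bot_mem : ⊥ ∈ carrier
  top_mem : ⊤ ∈ carrier
  ide_mem : ide ∈ carrier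
  compl_mem : ∀ x ∈ carrier, xᶜ ∈ carrier
  sup_mem : ∀ x ∈ carrier, ∀ y ∈ carrier, x ⊔ y ∈ carrier
  comp_mem : ∀ x ∈ carrier, ∀ y ∈ carrier, comp x y ∈ carrier
  conv_mem : ∀ x ∈ carrier, conv x ∈ carrier

/-- An atom of a subalgebra: a minimal nonzero element of the subalgebra. -/
def Subalgebra.AtomOf (E : Subalgebra α) (a : α) : Prop :=
  a ∈ E.carrier ∧ a ≠ ⊥ ∧ ∀ b ∈ E.carrier, b ≤ a → b = ⊥ ∨ b = a

/-- A diversity atom of a subalgebra. -/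
def Subalgebra.DivAtomOf (E : Subalgebra α) (a : α) : Prop :=
  E.AtomOf a ∧ a ≤ (div : α)

/-- `α` is (a copy of) the algebra E^{23}_q with atoms `e 0 = 1', e 1, …, e (q-1)`:
symmetric, integral, distinct diversity atoms multiply to 0', and
`e i ; e i = (e i)ᶜ` for diversity atoms. -/
def IsE23 (q : ℕ) (e : Fin q → α) : Prop :=
  Symmetric α ∧ Integral α ∧
  Function.Injective e ∧ (∀ i : Fin q, (i : ℕ) = 0 → e i = ide) ∧
  (∀ i, IsAtom (e i)) ∧
  (∀ x : α, IsAtom x → ∃ i, x = e i) ∧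
  (∀ i j : Fin q, (i : ℕ) ≠ 0 → (j : ℕ) ≠ 0 → i ≠ j →
    comp (e i) (e j) = (div : α)) ∧
  (∀ i : Fin q, (i : ℕ) ≠ 0 → comp (e i) (e i) = (e i)ᶜ)

/-- The subalgebra `Q` of `α` is a copy of E^{23}_q with atoms `e i`. -/
def IsE23Sub (Q : Subalgebra α) (q : ℕ) (e : Fin q → α) : Prop :=
  Function.Injective e ∧ (∀ i : Fin q, (i : ℕ) = 0 → e i = ide) ∧
  (∀ i, Q.AtomOf (e i)) ∧
  (∀ x : α, Q.AtomOf x → ∃ i, x = e i) ∧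
  (∀ i j : Fin q, (i : ℕ) ≠ 0 → (j : ℕ) ≠ 0 → i ≠ j →
    comp (e i) (e j) = (div : α)) ∧
  (∀ i : Fin q, (i : ℕ) ≠ 0 → comp (e i) (e i) = (e i)ᶜ)

/-- `cov` is a cover map for the subalgebra `E`: it sends each atom of the
ambient algebra to the atom of `E` containing it. -/
def CoverMap (E : Subalgebra α) (cov : α → α) : Prop :=
  ∀ x : α, IsAtom x → E.AtomOf (cov x) ∧ x ≤ cov x

/-- The ambient atomic algebra is obtained from the subalgebra `B` by
splitting, with cover map `cov`. -/
def Splitting (B : Subalgebra α) (cov : α → α) : Prop :=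
  CoverMap B cov ∧
  (∀ x y : α, DivAtom x → DivAtom y →
    (x = conv y → comp x y = comp (cov x) (cov y)) ∧
    (x ≠ conv y → comp x y = comp (cov x) (cov y) ⊓ (div : α)))

/-- The ambient algebra is a special extension of its subalgebra `E`. -/
def SpecialExt (E : Subalgebra α) : Prop :=
  (∀ a b c : α, E.DivAtomOf a → E.DivAtomOf b → E.DivAtomOf c →
    ¬(a = b ∧ b = c) → c ≤ comp a b →
    ∀ x y : α, IsAtom x → IsAtom y → x ≤ a → y ≤ b → c ≤ comp x y) ∧
  (∀ a : α, E.DivAtomOf a → a ≤ comp a a →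
    ∀ x y : α, IsAtom x → IsAtom y → x ≤ a → y ≤ a → comp x y ⊓ a ≠ ⊥)

/-- A flexible atom. -/
def Flexible (a : α) : Prop :=
  DivAtom a ∧ comp a a = ⊤ ∧
  ∀ x : α, DivAtom x → x ≠ a → comp x a = (div : α)

/-- A flexible atom of a subalgebra. -/
def FlexibleOf (E : Subalgebra α) (a : α) : Prop :=
  E.DivAtomOf a ∧ comp a a = ⊤ ∧
  ∀ x : α, E.DivAtomOf x → x ≠ a → comp x a = (div : α)

/-- A flexible trio of diversity atoms. -/
def FlexTrio (a b c : α) : Prop :=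
  DivAtom a ∧ DivAtom b ∧ DivAtom c ∧ a ≠ b ∧ a ≠ c ∧ b ≠ c ∧
  comp a a = ⊤ ∧ comp b b = ⊤ ∧ comp c c = ⊤ ∧
  comp a b = (div : α) ∧ comp a c = (div : α) ∧ comp b c = (div : α) ∧
  ∀ x : α, IsAtom x → x ∉ ({(ide : α), a, b, c} : Set α) →
    (comp x a = (div : α) ∧ comp x b = (div : α)) ∨
    (comp x a = (div : α) ∧ comp x c = (div : α)) ∨
    (comp x b = (div : α) ∧ comp x c = (div : α))

/-- A flexible trio of diversity atoms of a subalgebra. -/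
def FlexTrioOf (E : Subalgebra α) (a b c : α) : Prop :=
  E.DivAtomOf a ∧ E.DivAtomOf b ∧ E.DivAtomOf c ∧ a ≠ b ∧ a ≠ c ∧ b ≠ c ∧
  comp a a = ⊤ ∧ comp b b = ⊤ ∧ comp c c = ⊤ ∧
  comp a b = (div : α) ∧ comp a c = (div : α) ∧ comp b c = (div : α) ∧
  ∀ d : α, E.DivAtomOf d → d ∉ ({a, b, c} : Set α) →
    (comp d a = (div : α) ∧ comp d b = (div : α)) ∨
    (comp d a = (div : α) ∧ comp d c = (div : α)) ∨
    (comp d b = (div : α) ∧ comp d c = (div : α))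

/-- Basic k-by-k matrices of atoms. -/
def BasicMatrix (k : ℕ) (μ : Fin k → Fin k → α) : Prop :=
  (∀ i j, IsAtom (μ i j)) ∧ (∀ i, μ i i ≤ (ide : α)) ∧
  (∀ i j, conv (μ i j) = μ j i) ∧
  (∀ i j l, μ i j ≤ comp (μ i l) (μ l j))

/-- The identity condition for a basic matrix. -/
def IdCond (k : ℕ) (μ : Fin k → Fin k → α) : Prop :=
  ∀ i j, μ i j = (ide : α) ↔ i = j

/-- The 1-point extension property. -/
def OnePointExt (α : Type u) [NA α] : Prop :=
  ∀ (k : ℕ) (μ : Fin k → Fin k → α), BasicMatrix k μ → IdCond k μ →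
  ∀ x y : α, DivAtom x → DivAtom y → ∀ i j : Fin k, i ≠ j → μ i j ≤ comp x y →
  ∃ μ' : Fin (k + 1) → Fin (k + 1) → α, BasicMatrix (k + 1) μ' ∧ IdCond (k + 1) μ' ∧
    (∀ l m : Fin k, μ' l.castSucc m.castSucc = μ l m) ∧
    μ' i.castSucc (Fin.last k) = x ∧ μ' (Fin.last k) j.castSucc = y

/-- A representation of `α` over a base set `X`. -/
structure Representation (α : Type u) [NA α] (X : Type v) where
  toFun : α → Set (X × X)
  inj : Function.Injective toFun
  map_sup : ∀ a b : α, toFun (a ⊔ b) = toFun a ∪ toFun b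
  map_compl : ∀ a : α, toFun aᶜ = toFun ⊤ \ toFun a
  map_comp : ∀ a b : α,
    toFun (comp a b) = {p | ∃ z, (p.1, z) ∈ toFun a ∧ (z, p.2) ∈ toFun b}
  map_conv : ∀ a : α, toFun (conv a) = {p | (p.2, p.1) ∈ toFun a}
  map_ide : toFun ide = {p | p ∈ toFun ⊤ ∧ p.1 = p.2}

/-- A complete representation: preserves all existing joins. -/
def Representation.IsComplete {α : Type u} [NA α] {X : Type v}
    (r : Representation α X) : Prop :=
  ∀ (S : Set α) (s : α), IsLUB S s → r.toFun s = ⋃ a ∈ S, r.toFun a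

/-- Representability. -/
def Representable (α : Type u) [NA α] : Prop :=
  ∃ X : Type u, Nonempty (Representation α X)

/-- A representation of a subalgebra `E` over a base set `X`. -/
structure SubRepresentation (E : Subalgebra α) (X : Type v) where
  toFun : α → Set (X × X)
  inj : ∀ x ∈ E.carrier, ∀ y ∈ E.carrier, toFun x = toFun y → x = y
  map_sup : ∀ x ∈ E.carrier, ∀ y ∈ E.carrier, toFun (x ⊔ y) = toFun x ∪ toFun y
  map_compl : ∀ x ∈ E.carrier, toFun xᶜ = toFun ⊤ \ toFun x
  map_comp : ∀ x ∈ E.carrier, ∀ y ∈ E.carrier,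
    toFun (comp x y) = {p | ∃ z, (p.1, z) ∈ toFun x ∧ (z, p.2) ∈ toFun y}
  map_conv : ∀ x ∈ E.carrier, toFun (conv x) = {p | (p.2, p.1) ∈ toFun x}
  map_ide : toFun ide = {p | p ∈ toFun ⊤ ∧ p.1 = p.2}

/-- A homomorphism of (non-associative) relation algebras. -/
structure Hom (α : Type u) (β : Type v) [NA α] [NA β] where
  toFun : α → β
  map_sup : ∀ a b : α, toFun (a ⊔ b) = toFun a ⊔ toFun b
  map_compl : ∀ a : α, toFun aᶜ = (toFun a)ᶜ
  map_comp : ∀ a b : α, toFun (comp a b) = comp (toFun a) (toFun b)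
  map_conv : ∀ a : α, toFun (conv a) = conv (toFun a)
  map_ide : toFun ide = ide

/-- The thinning relation T(i,j,k) ⟺ (i ≤ j = k) ∨ (j ≤ k = i) ∨ (k ≤ i = j). -/
def T3 (i j k : ℕ) : Prop :=
  (i ≤ j ∧ j = k) ∨ (j ≤ k ∧ k = i) ∨ (k ≤ i ∧ i = j)

/-- The type of diversity atoms of `α`. -/
abbrev DAt (α : Type u) [NA α] : Type u := {x : α // DivAtom x}

/-- Atoms of the algebra C_E(A): the identity atom `none` together with
copies `some (x, i)` of each diversity atom `x` of `A`, for `i ∈ ω`. -/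
abbrev CAtom (α : Type u) [NA α] : Type u := Option (DAt α × ℕ)

/-- The cycle relation of the atom structure of C_E(A), relative to the cover
map `cov` of the subalgebra E. -/
def Cyc (cov : α → α) : CAtom α → CAtom α → CAtom α → Prop
  | none, none, none => True
  | none, some p, some q => p = q
  | some p, none, some q => p = q
  | some p, some q, none => p = q
  | some p, some q, some r =>
      r.1.1 ≤ comp p.1.1 q.1.1 ∧
      (cov p.1.1 = cov q.1.1 ∧ cov q.1.1 = cov r.1.1 → T3 p.2 q.2 r.2)
  | _, _, _ => False

/-- Relative multiplication in the complex algebra C_E(A). -/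
def Ccomp (cov : α → α) (X Y : Set (CAtom α)) : Set (CAtom α) :=
  {w | ∃ u ∈ X, ∃ v ∈ Y, Cyc cov u v w}

/-- The element J(a, n) of C_E(A). -/
def Jel (a : α) (n : ℕ) : Set (CAtom α) :=
  {w | (∃ p : DAt α × ℕ, w = some p ∧ p.1.1 ≤ a ∧ n ≤ p.2) ∨
       (w = none ∧ (ide : α) ≤ a)}

/-- The atom set B_n of the finite subalgebra of C_E(A). -/
def Bset (E : Subalgebra α) (n : ℕ) : Set (Set (CAtom α)) :=
  {s | s = ({none} : Set (CAtom α))} ∪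
  {s | ∃ (x : DAt α) (i : ℕ), i < n ∧ s = {some (x, i)}} ∪
  {s | ∃ a : α, E.DivAtomOf a ∧ s = Jel a n}

/-- Subalgebra of C_E(A) generated by a set `G` of elements. -/
inductive GenFrom (cov : α → α) (G : Set (Set (CAtom α))) : Set (CAtom α) → Prop
  | base {s : Set (CAtom α)} : s ∈ G → GenFrom cov G s
  | bot : GenFrom cov G ∅
  | idel : GenFrom cov G ({none} : Set (CAtom α))
  | compl {s : Set (CAtom α)} : GenFrom cov G s → GenFrom cov G sᶜ
  | sup {s t : Set (CAtom α)} : GenFrom cov G s → GenFrom cov G t →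
      GenFrom cov G (s ∪ t)
  | cmp {s t : Set (CAtom α)} : GenFrom cov G s → GenFrom cov G t →
      GenFrom cov G (Ccomp cov s t)

/-- Membership in the subalgebra B of C_E(A) generated by the atoms. -/
def Gen (cov : α → α) : Set (CAtom α) → Prop :=
  GenFrom cov {s | ∃ w : CAtom α, s = {w}}

lemma Subalgebra.inf_mem' (S : Subalgebra α) {x y : α}
    (hx : x ∈ S.carrier) (hy : y ∈ S.carrier) : x ⊓ y ∈ S.carrier := by
  have h := S.compl_mem _ (S.sup_mem _ (S.compl_mem _ hx) _ (S.compl_mem _ hy))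
  simpa using h

lemma Subalgebra.atomOf_eq (S : Subalgebra α) {a c : α}
    (ha : S.AtomOf a) (hc : S.AtomOf c) (h : a ⊓ c ≠ ⊥) : a = c := by
  have hmem := S.inf_mem' ha.1 hc.1
  rcases ha.2.2 _ hmem inf_le_left with h1 | h1
  · exact absurd h1 h
  rcases hc.2.2 _ hmem inf_le_right with h2 | h2
  · exact absurd h2 h
  rw [← h1, h2]

end NA

/-- Every Monk algebra obtained from E^{23}_q by splitting is a
special extension of every subalgebra of E^{23}_q. -/
theorem stmt1 {α : Type} [RA α] (hat : IsAtomic α)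
    (hsym : NA.Symmetric α) (hint : NA.Integral α)
    (q : ℕ) (hq : 4 ≤ q) (Q : NA.Subalgebra α) (e : Fin q → α)
    (hQ : NA.IsE23Sub Q q e) (cov : α → α) (hsplit : NA.Splitting Q cov) :
    ∀ E : NA.Subalgebra α, E.carrier ⊆ Q.carrier → NA.SpecialExt E := by
  intro E hE
  obtain ⟨hinj, he0, heat, hall, hdist, hsame⟩ := hQ
  obtain ⟨hcovm, hsp⟩ := hsplit
  -- covers of atoms below an element of Q stay below it
  have covle : ∀ {x a : α}, IsAtom x → a ∈ Q.carrier → x ≤ a → cov x ≤ a := by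
    intro x a hx ha hxa
    obtain ⟨hcQ, hxc⟩ := hcovm x hx
    have hmem := Q.inf_mem' hcQ.1 ha
    rcases hcQ.2.2 _ hmem inf_le_left with h | h
    · exact absurd (le_bot_iff.mp (h ▸ le_inf hxc hxa)) hx.1
    · exact inf_eq_left.mp h
  have hdivQ : (NA.div : α) ∈ Q.carrier := Q.compl_mem _ Q.ide_mem
  have ine0 : ∀ {i : Fin q}, e i ≤ (NA.div : α) → (i : ℕ) ≠ 0 := by
    intro i hle h0
    rw [he0 i h0] at hle
    have hle' : (NA.ide : α) ≤ (NA.ide : α)ᶜ := hle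
    exact hint.1 (le_bot_iff.mp (by simpa using le_inf le_rfl hle'))
  -- master analysis of comp x y for diversity atoms x, y
  have key : ∀ x y : α, IsAtom x → IsAtom y → x ≤ (NA.div : α) → y ≤ (NA.div : α) →
      ∃ i j : Fin q, cov x = e i ∧ cov y = e j ∧ (i : ℕ) ≠ 0 ∧ (j : ℕ) ≠ 0 ∧
        ((NA.div : α) ≤ NA.comp x y ∨ (i = j ∧ (e i)ᶜ ⊓ (NA.div : α) ≤ NA.comp x y)) := by
    intro x y hx hy hxd hyd
    obtain ⟨i, hci⟩ := hall _ (hcovm x hx).1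
    obtain ⟨j, hcj⟩ := hall _ (hcovm y hy).1
    have hi0 : (i : ℕ) ≠ 0 := ine0 (hci ▸ covle hx hdivQ hxd)
    have hj0 : (j : ℕ) ≠ 0 := ine0 (hcj ▸ covle hy hdivQ hyd)
    refine ⟨i, j, hci, hcj, hi0, hj0, ?_⟩
    have hsxy := hsp x y ⟨hx, hxd⟩ ⟨hy, hyd⟩
    by_cases hxy : x = NA.conv y
    · -- then x = y, so i = j and comp x y = (e i)ᶜ
      have hxy' : x = y := by rw [hsym y] at hxy; exact hxy
      have hij : i = j := hinj (by rw [← hci, ← hcj, hxy'])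
      right
      refine ⟨hij, ?_⟩
      have : NA.comp x y = (e i)ᶜ := by
        rw [hsxy.1 hxy, hci, hcj, ← hij, hsame i hi0]
      rw [this]; exact inf_le_left
    · have hceq : NA.comp x y = NA.comp (e i) (e j) ⊓ (NA.div : α) := by
        rw [hsxy.2 hxy, hci, hcj]
      by_cases hij : i = j
      · right
        refine ⟨hij, ?_⟩
        rw [hceq, ← hij, hsame i hi0]
      · left
        rw [hceq, hdist i j hi0 hj0 hij]
        exact le_inf le_rfl le_rfl
  constructor
  · -- condition (i)
    intro a b c hA hB hC hne hcab x y hx hy hxa hyb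
    have haQ : a ∈ Q.carrier := hE hA.1.1
    have hbQ : b ∈ Q.carrier := hE hB.1.1
    have hcQ : c ∈ Q.carrier := hE hC.1.1
    obtain ⟨i, j, hci, hcj, hi0, hj0, hcase⟩ :=
      key x y hx hy (hxa.trans hA.2) (hyb.trans hB.2)
    have eia : e i ≤ a := hci ▸ covle hx haQ hxa
    have ejb : e j ≤ b := hcj ▸ covle hy hbQ hyb
    rcases hcase with hle | ⟨hij, hle⟩
    · exact hC.2.trans hle
    · -- need c ≤ (e i)ᶜ
      subst hij
      have heib : e i ≤ b := ejb
      have heiQ := (heat i).1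
      have hmem := Q.inf_mem' heiQ hcQ
      rcases (heat i).2.2 _ hmem inf_le_left with h | h
      · -- e i ⊓ c = ⊥, so c ≤ (e i)ᶜ
        have hcle : c ≤ (e i)ᶜ := (disjoint_iff.mpr h).le_compl_left
        exact le_trans (le_inf hcle hC.2) hle
      · -- e i ≤ c, forcing a = b = c, contradiction
        exfalso
        have heic : e i ≤ c := inf_eq_left.mp h
        have heibot : e i ≠ ⊥ := (heat i).2.1
        have hac : a = c := E.atomOf_eq hA.1 hC.1
          (fun hb => heibot (le_bot_iff.mp (hb ▸ le_inf eia heic)))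
        have hbc : b = c := E.atomOf_eq hB.1 hC.1
          (fun hb => heibot (le_bot_iff.mp (hb ▸ le_inf heib heic)))
        exact hne ⟨hac.trans hbc.symm, hbc⟩
  · -- condition (ii)
    intro a hA haa x y hx hy hxa hya
    have haQ : a ∈ Q.carrier := hE hA.1.1
    obtain ⟨i, j, hci, hcj, hi0, hj0, hcase⟩ :=
      key x y hx hy (hxa.trans hA.2) (hya.trans hA.2)
    have eia : e i ≤ a := hci ▸ covle hx haQ hxa
    have habot : a ≠ ⊥ := hA.1.2.1
    have claim : ∀ k : Fin q, (k : ℕ) ≠ 0 → e k ≤ a → (e k)ᶜ ⊓ a ≠ ⊥ := by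
      intro k hk0 hka hbot
      have hak : a ≤ e k := by
        have h1 : a \ e k = ⊥ := by rw [sdiff_eq, inf_comm]; exact hbot
        exact sdiff_eq_bot_iff.mp h1
      have hae : a = e k := le_antisymm hak hka
      have h2 : a ≤ aᶜ := by
        rw [hae] at haa ⊢
        rw [hsame k hk0] at haa
        exact haa
      exact habot (le_bot_iff.mp (by simpa using le_inf le_rfl h2))
    rcases hcase with hle | ⟨hij, hle⟩
    · intro hbot
      exact habot (le_bot_iff.mp (hbot ▸ le_inf (hA.2.trans hle) le_rfl))
    · intro hbot
      refine claim i hi0 eia (le_bot_iff.mp (hbot ▸ le_inf ?_ inf_le_right))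
      exact le_trans (inf_le_inf_left _ hA.2) hle
end

section
/- Every proper subalgebra of E^{23}_q contains a flexible atom, and hence every proper subalgebra of E^{23}_q is representable. -/
universe u v

/-! ### Auxiliary development -/

namespace StmtAux

open NA

universe w

variable {α : Type w} [NA α]

lemma comp_le_comp {x x' y y' : α} (hx : x ≤ x') (hy : y ≤ y') :
    comp x y ≤ comp x' y' := by
  have h1 : comp x' y = comp x y ⊔ comp x' y := by
    rw [← sup_comp, sup_eq_right.mpr hx]
  have h2 : comp x' y' = comp x' y ⊔ comp x' y' := by
    rw [← comp_sup, sup_eq_right.mpr hy]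
  exact le_trans (h1 ▸ le_sup_left) (h2 ▸ le_sup_left)

lemma comp_bot (x : α) : comp x (⊥ : α) = ⊥ := by
  have := (peirce1 x ⊥ (comp x ⊥)).mpr (by simp)
  simpa using this

lemma bot_comp (y : α) : comp (⊥ : α) y = ⊥ := by
  have := (peirce2 ⊥ y (comp ⊥ y)).mpr (by simp)
  simpa using this

lemma inf_bot_iff_le_compl {x y : α} : x ⊓ y = ⊥ ↔ x ≤ yᶜ := by
  rw [le_compl_iff_disjoint_right, disjoint_iff]

lemma atom_le_sup {x a b : α} (hx : IsAtom x) (h : x ≤ a ⊔ b) : x ≤ a ∨ x ≤ b := by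
  have hd : x = (x ⊓ a) ⊔ (x ⊓ b) := by
    rw [← inf_sup_left, inf_eq_left.mpr h]
  rcases hx.le_iff.mp (inf_le_left : x ⊓ a ≤ x) with h1 | h1
  · right
    rw [h1, bot_sup_eq] at hd
    exact hd.le.trans inf_le_right
  · left
    exact h1 ▸ inf_le_right

lemma atom_le_finsetSup {x : α} (hx : IsAtom x) {γ : Type*} {F : Finset γ} {f : γ → α}
    (h : x ≤ F.sup f) : ∃ c ∈ F, x ≤ f c := by
  classical
  induction F using Finset.induction_on with
  | empty => simp at h; exact absurd h hx.1
  | insert c F hni ih =>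
    rw [Finset.sup_insert] at h
    rcases atom_le_sup hx h with h1 | h1
    · exact ⟨c, Finset.mem_insert_self c F, h1⟩
    · obtain ⟨d, hd, hxd⟩ := ih h1
      exact ⟨d, Finset.mem_insert_of_mem hd, hxd⟩

lemma exists_atom_le [Fintype α] {v : α} (hv : v ≠ ⊥) : ∃ x : α, IsAtom x ∧ x ≤ v := by
  classical
  have hne : ({y ∈ Finset.univ | y ≤ v ∧ y ≠ ⊥} : Finset α).Nonempty :=
    ⟨v, by simp [hv]⟩
  obtain ⟨m, hm, hmin⟩ := (Finset.exists_minimal hne).imp fun m hm =>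
    And.intro hm.1 (fun x hx (hlt : x < m) => hlt.not_ge (hm.2 hx hlt.le))
  simp only [Finset.mem_filter, Finset.mem_univ, true_and] at hm
  refine ⟨m, ⟨hm.2, ?_⟩, hm.1⟩
  intro b hb
  by_contra hbne
  exact hmin b (by simp [lt_of_lt_of_le hb hm.1, hb.le.trans hm.1, hbne]) hb

open Classical in
lemma eq_sup_atoms [Fintype α] (v : α) :
    v = ({x ∈ Finset.univ | IsAtom x ∧ x ≤ v} : Finset α).sup id := by
  classical
  set F := ({x ∈ Finset.univ | IsAtom x ∧ x ≤ v} : Finset α) with hF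
  have hs : F.sup id ≤ v := Finset.sup_le fun x hx => by
    simp only [hF, Finset.mem_filter] at hx; exact hx.2.2
  have hbot : v ⊓ (F.sup id)ᶜ = ⊥ := by
    by_contra hne
    obtain ⟨x, hx, hxle⟩ := exists_atom_le hne
    have hxv : x ≤ v := hxle.trans inf_le_left
    have hxs : x ≤ F.sup id := Finset.le_sup (f := id) (by simp [hF, hx, hxv])
    have hxb : x ≤ (⊥ : α) := by
      have := le_inf hxs (hxle.trans inf_le_right)
      rwa [inf_compl_eq_bot] at this
    exact hx.1 (le_bot_iff.mp hxb)
  have : v ≤ F.sup id := by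
    have := inf_bot_iff_le_compl.mp hbot
    rwa [compl_compl] at this
  exact le_antisymm this hs

/-! ### Subalgebra lemmas -/

variable {E : NA.Subalgebra α}

lemma inf_mem {x y : α} (hx : x ∈ E.carrier) (hy : y ∈ E.carrier) :
    x ⊓ y ∈ E.carrier := by
  have : x ⊓ y = (xᶜ ⊔ yᶜ)ᶜ := by simp
  rw [this]
  exact E.compl_mem _ (E.sup_mem _ (E.compl_mem _ hx) _ (E.compl_mem _ hy))

lemma finsetSup_mem {γ : Type*} {F : Finset γ} {f : γ → α}
    (h : ∀ c ∈ F, f c ∈ E.carrier) : F.sup f ∈ E.carrier := by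
  classical
  induction F using Finset.induction_on with
  | empty => simpa using E.bot_mem
  | insert c F hni ih =>
    rw [Finset.sup_insert]
    exact E.sup_mem _ (h c (Finset.mem_insert_self c F)) _
      (ih fun d hd => h d (Finset.mem_insert_of_mem hd))

lemma eatom_le_or_bot {t b : α} (ht : E.AtomOf t) (hb : b ∈ E.carrier) :
    t ≤ b ∨ t ⊓ b = ⊥ := by
  rcases ht.2.2 (t ⊓ b) (inf_mem ht.1 hb) inf_le_left with h | h
  · right; exact h
  · left; rw [← h]; exact inf_le_right

lemma eatom_le_eatom {t s : α} (ht : E.AtomOf t) (hs : E.AtomOf s) (h : t ≤ s) :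
    t = s := by
  rcases hs.2.2 t ht.1 h with h1 | h1
  · exact absurd h1 ht.2.1
  · exact h1

lemma eatom_disj {t s : α} (ht : E.AtomOf t) (hs : E.AtomOf s) (hne : t ≠ s) :
    t ⊓ s = ⊥ := by
  rcases eatom_le_or_bot ht hs.1 with h | h
  · exact absurd (eatom_le_eatom ht hs h) hne
  · exact h

lemma eatom_le_sup {t a b : α} (ht : E.AtomOf t) (ha : a ∈ E.carrier)
    (hb : b ∈ E.carrier) (h : t ≤ a ⊔ b) : t ≤ a ∨ t ≤ b := by
  rcases eatom_le_or_bot ht ha with h1 | h1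
  · exact Or.inl h1
  rcases eatom_le_or_bot ht hb with h2 | h2
  · exact Or.inr h2
  exfalso
  have : t = (t ⊓ a) ⊔ (t ⊓ b) := by rw [← inf_sup_left, inf_eq_left.mpr h]
  rw [h1, h2, sup_idem] at this
  exact ht.2.1 this

lemma eatom_le_finsetSup {t : α} (ht : E.AtomOf t) {γ : Type*} {F : Finset γ}
    {f : γ → α} (hmem : ∀ c ∈ F, f c ∈ E.carrier) (h : t ≤ F.sup f) :
    ∃ c ∈ F, t ≤ f c := by
  classical
  induction F using Finset.induction_on with
  | empty => simp at h; exact absurd h ht.2.1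
  | insert c F hni ih =>
    rw [Finset.sup_insert] at h
    rcases eatom_le_sup ht (hmem c (Finset.mem_insert_self c F))
      (finsetSup_mem fun d hd => hmem d (Finset.mem_insert_of_mem hd)) h with h1 | h1
    · exact ⟨c, Finset.mem_insert_self c F, h1⟩
    · obtain ⟨d, hd, hxd⟩ := ih (fun d hd => hmem d (Finset.mem_insert_of_mem hd)) h1
      exact ⟨d, Finset.mem_insert_of_mem hd, hxd⟩

lemma exists_eatom_le [Fintype α] {v : α} (hvE : v ∈ E.carrier) (hv : v ≠ ⊥) :
    ∃ t : α, E.AtomOf t ∧ t ≤ v := by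
  classical
  have hne : ({y ∈ Finset.univ | y ∈ E.carrier ∧ y ≤ v ∧ y ≠ ⊥} : Finset α).Nonempty :=
    ⟨v, by simp [hv, hvE]⟩
  obtain ⟨m, hm, hmin⟩ := (Finset.exists_minimal hne).imp fun m hm =>
    And.intro hm.1 (fun x hx (hlt : x < m) => hlt.not_ge (hm.2 hx hlt.le))
  simp only [Finset.mem_filter, Finset.mem_univ, true_and] at hm
  refine ⟨m, ⟨hm.1, hm.2.2, ?_⟩, hm.2.1⟩
  intro b hbE hb
  by_contra hbne
  push_neg at hbne
  exact hmin b (by simp [hbE, hb.trans hm.2.1, hbne.1]) (lt_of_le_of_ne hb hbne.2)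

open Classical in
lemma eq_sup_eatoms [Fintype α] {v : α} (hvE : v ∈ E.carrier) :
    v = ({x ∈ Finset.univ | E.AtomOf x ∧ x ≤ v} : Finset α).sup id := by
  classical
  set F := ({x ∈ Finset.univ | E.AtomOf x ∧ x ≤ v} : Finset α) with hF
  have hFE : ∀ c ∈ F, id c ∈ E.carrier := fun c hc => by
    simp only [hF, Finset.mem_filter] at hc; exact hc.2.1.1
  have hs : F.sup id ≤ v := Finset.sup_le fun x hx => by
    simp only [hF, Finset.mem_filter] at hx; exact hx.2.2
  have hbot : v ⊓ (F.sup id)ᶜ = ⊥ := by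
    by_contra hne
    obtain ⟨x, hx, hxle⟩ := exists_eatom_le
      (inf_mem hvE (E.compl_mem _ (finsetSup_mem hFE))) hne
    have hxv : x ≤ v := hxle.trans inf_le_left
    have hxs : x ≤ F.sup id := Finset.le_sup (f := id) (by simp [hF, hx, hxv])
    have hxb : x ≤ (⊥ : α) := by
      have := le_inf hxs (hxle.trans inf_le_right)
      rwa [inf_compl_eq_bot] at this
    exact hx.2.1 (le_bot_iff.mp hxb)
  have : v ≤ F.sup id := by
    have := inf_bot_iff_le_compl.mp hbot
    rwa [compl_compl] at this
  exact le_antisymm this hs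

lemma eatom_le_compl_iff {t a : α} (ht : E.AtomOf t) (ha : a ∈ E.carrier) :
    t ≤ aᶜ ↔ ¬ t ≤ a := by
  constructor
  · intro h1 h2
    have : t ≤ (⊥ : α) := by
      have := le_inf h2 h1
      rwa [inf_compl_eq_bot] at this
    exact ht.2.1 (le_bot_iff.mp this)
  · intro h1
    rcases eatom_le_or_bot ht ha with h | h
    · exact absurd h h1
    · exact inf_bot_iff_le_compl.mp h

/-! ### Structure lemmas for E23 -/

lemma ide_ne_bot (hint : Integral α) : (ide : α) ≠ ⊥ := hint.1

lemma eatom_ide (hint : Integral α) (hiE : (ide : α) ∈ E.carrier) : E.AtomOf (ide : α) := by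
  refine ⟨hiE, hint.1, fun b _ hb => ?_⟩
  rcases hint.le_iff.mp hb with h | h
  · exact Or.inl h
  · exact Or.inr h

lemma eatom_ide_or_div (hint : Integral α) {t : α} (ht : E.AtomOf t) :
    t = (ide : α) ∨ E.DivAtomOf t := by
  by_cases h : t = (ide : α)
  · exact Or.inl h
  · refine Or.inr ⟨ht, ?_⟩
    rcases eatom_le_or_bot ht (E.ide_mem) with h1 | h1
    · rcases hint.le_iff.mp h1 with h2 | h2
      · exact absurd h2 ht.2.1
      · exact absurd h2 h
    · exact inf_bot_iff_le_compl.mp h1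

lemma divatom_ne_bot {t : α} (ht : NA.DivAtom t) : t ≠ ⊥ := ht.1.1

lemma atom_le_div_cases {q : ℕ} {e : Fin q → α} (hE : NA.IsE23 q e) {x : α}
    (hx : IsAtom x) (hxd : x ≤ (NA.div : α)) :
    ∃ i : Fin q, (i : ℕ) ≠ 0 ∧ x = e i := by
  obtain ⟨i, hi⟩ := hE.2.2.2.2.2.1 x hx
  refine ⟨i, fun h0 => ?_, hi⟩
  have : x = (ide : α) := by rw [hi, hE.2.2.2.1 i h0]
  rw [this] at hxd
  have : (ide : α) ≤ ⊥ := by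
    have := le_inf (le_refl (ide : α)) hxd
    rwa [NA.div, inf_compl_eq_bot] at this
  exact hE.2.1.1 (le_bot_iff.mp this)

lemma atom_comp_ne {q : ℕ} {e : Fin q → α} (hE : NA.IsE23 q e) {x y : α}
    (hx : IsAtom x) (hy : IsAtom y) (hxd : x ≤ (NA.div : α)) (hyd : y ≤ (NA.div : α))
    (hne : x ≠ y) : comp x y = (NA.div : α) := by
  obtain ⟨i, hi0, hi⟩ := atom_le_div_cases hE hx hxd
  obtain ⟨j, hj0, hj⟩ := atom_le_div_cases hE hy hyd
  have hij : i ≠ j := fun h => hne (by rw [hi, hj, h])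
  rw [hi, hj]
  exact hE.2.2.2.2.2.2.1 i j hi0 hj0 hij

lemma atom_comp_self {q : ℕ} {e : Fin q → α} (hE : NA.IsE23 q e) {x : α}
    (hx : IsAtom x) (hxd : x ≤ (NA.div : α)) : comp x x = xᶜ := by
  obtain ⟨i, hi0, hi⟩ := atom_le_div_cases hE hx hxd
  rw [hi]
  exact hE.2.2.2.2.2.2.2 i hi0

lemma ide_le_comp_self (hsym : NA.Symmetric α) (hint : Integral α) {t : α}
    (ht : t ≠ ⊥) : (ide : α) ≤ comp t t := by
  have hne : comp t t ⊓ (ide : α) ≠ ⊥ := by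
    intro h
    have := (peirce1 t t (ide : α)).mp h
    rw [hsym t, comp_ide] at this
    rw [inf_idem] at this; exact ht this
  rcases hint.le_iff.mp (inf_le_right : comp t t ⊓ (ide : α) ≤ ide) with h | h
  · exact absurd h hne
  · rw [← h]; exact inf_le_left

/-- C1: distinct diversity atoms of `E` compose to the diversity element. -/
lemma divatom_comp_ne [Fintype α] {q : ℕ} {e : Fin q → α} (hE : NA.IsE23 q e)
    {t s : α} (ht : E.DivAtomOf t) (hs : E.DivAtomOf s) (hne : t ≠ s) :
    comp t s = (NA.div : α) := by
  have hdisj : t ⊓ s = ⊥ := eatom_disj ht.1 hs.1 hne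
  have hle : comp t s ≤ (NA.div : α) := by
    have h1 : comp t s ⊓ (ide : α) = ⊥ := by
      rw [peirce1, hE.1 t, comp_ide]
      exact hdisj
    exact inf_bot_iff_le_compl.mp h1
  have hge : (NA.div : α) ≤ comp t s := by
    obtain ⟨x, hx, hxt⟩ := exists_atom_le ht.1.2.1
    obtain ⟨y, hy, hys⟩ := exists_atom_le hs.1.2.1
    have hxy : x ≠ y := by
      intro h
      subst h
      exact hx.1 (le_bot_iff.mp ((le_inf hxt hys).trans hdisj.le))
    have := atom_comp_ne hE hx hy (hxt.trans ht.2) (hys.trans hs.2) hxy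
    calc (NA.div : α) = comp x y := this.symm
      _ ≤ comp t s := comp_le_comp hxt hys
  exact le_antisymm hle hge

/-- C2: a diversity atom of `E` composes with itself to ⊤, or it is an atom
of `α` and composes to its complement. -/
lemma divatom_comp_self [Fintype α] {q : ℕ} {e : Fin q → α} (hE : NA.IsE23 q e)
    {t : α} (ht : E.DivAtomOf t) :
    comp t t = ⊤ ∨ (IsAtom t ∧ comp t t = tᶜ) := by
  by_cases hat : IsAtom t
  · exact Or.inr ⟨hat, atom_comp_self hE hat ht.2⟩
  left
  obtain ⟨x, hx, hxt⟩ := exists_atom_le ht.1.2.1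
  have hxnet : x ≠ t := fun h => hat (h ▸ hx)
  have hne : t ⊓ xᶜ ≠ ⊥ := by
    intro h
    have : t ≤ x := inf_bot_iff_le_compl.mp h |>.trans (by simp)
    exact hxnet (le_antisymm hxt this)
  obtain ⟨y, hy, hyt⟩ := exists_atom_le hne
  have hyx : y ≠ x := by
    intro h
    subst h
    have : y ≤ (⊥ : α) := by
      have := le_inf (hyt.trans inf_le_right) (le_refl y)
      rw [inf_comm] at this
      rwa [inf_compl_eq_bot] at this
    exact hy.1 (le_bot_iff.mp this)
  have h1 : (NA.div : α) ≤ comp t t :=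
    (atom_comp_ne hE hy hx ((hyt.trans inf_le_left).trans ht.2) (hxt.trans ht.2) hyx) ▸
      comp_le_comp (hyt.trans inf_le_left) hxt
  have h2 : (ide : α) ≤ comp t t := ide_le_comp_self hE.1 hE.2.1 ht.1.2.1
  have h3 : ⊤ ≤ comp t t := by
    have h4 : (ide : α) ⊔ (NA.div : α) ≤ comp t t := sup_le h2 h1
    rwa [NA.div, sup_compl_eq_top] at h4
  exact le_antisymm le_top h3

/-- C3: a proper subalgebra has a flexible diversity atom. -/
lemma exists_flexible [Fintype α] {q : ℕ} {e : Fin q → α} (hE : NA.IsE23 q e)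
    (hproper : E.carrier ≠ Set.univ) :
    ∃ A : α, E.DivAtomOf A ∧ comp A A = ⊤ := by
  classical
  by_contra hno
  push_neg at hno
  -- every atom of E is an atom of α
  have hEat : ∀ t : α, E.AtomOf t → IsAtom t := by
    intro t ht
    rcases eatom_ide_or_div hE.2.1 ht with h | h
    · rw [h]; exact hE.2.1
    · rcases divatom_comp_self hE h with h1 | h1
      · exact absurd h1 (hno t h)
      · exact h1.1
  -- every atom of α belongs to E
  have hatE : ∀ x : α, IsAtom x → x ∈ E.carrier := by
    intro x hx
    have htop := eq_sup_eatoms (E := E) E.top_mem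
    have hle : x ≤ ({y ∈ Finset.univ | E.AtomOf y ∧ y ≤ ⊤} : Finset α).sup id := by
      rw [← htop]; exact le_top
    obtain ⟨t, htmem, hxt⟩ := atom_le_finsetSup hx hle
    simp only [Finset.mem_filter, Finset.mem_univ, true_and] at htmem
    have htat := hEat t htmem.1
    rcases htat.le_iff.mp hxt with h | h
    · exact absurd h hx.1
    · rw [h]; exact htmem.1.1
  -- hence E is everything
  apply hproper
  apply Set.eq_univ_iff_forall.mpr
  intro v
  rw [eq_sup_atoms v]
  exact finsetSup_mem fun c hc => by
    simp only [Finset.mem_filter, Finset.mem_univ, true_and] at hc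
    exact hatE c hc.1

lemma flex_le_comp_self [Fintype α] {q : ℕ} {e : Fin q → α} (hE : NA.IsE23 q e)
    {A t : α} (hA : E.DivAtomOf A) (hAtop : comp A A = ⊤) (ht : E.DivAtomOf t) :
    A ≤ comp t t := by
  by_cases h : t = A
  · rw [h, hAtop]; exact le_top
  rcases divatom_comp_self hE ht with h1 | h1
  · rw [h1]; exact le_top
  · rw [h1.2]
    exact inf_bot_iff_le_compl.mp (eatom_disj hA.1 ht.1 fun h2 => h h2.symm)

lemma flex_ne_nonflex {A t : α} (hA : E.DivAtomOf A) (hAtop : comp A A = ⊤)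
    (ht : comp t t = tᶜ) (htb : t ≠ ⊥) : t ≠ A := by
  intro h
  subst h
  rw [hAtop] at ht
  exact htb (by simpa using (congrArg (·ᶜ) ht).symm)

/-! ### The witness tree and its coloring -/

inductive Vt (α : Type w) : Type w
  | base : Vt α
  | wit (a b : Vt α) (t s : α) : Vt α

namespace Vt

def depth {α : Type w} : Vt α → ℕ
  | base => 0
  | wit a b _ _ => max a.depth b.depth + 1

end Vt

open Classical in
/-- Partial coloring: `pre E A x y = some c` when `x` is a witness vertex and
`y` is one of its two distinguished neighbors. -/
noncomputable def pre (E : NA.Subalgebra α) (A : α) : Vt α → Vt α → Option α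
  | .base, _ => none
  | .wit a b t s, y =>
    if E.DivAtomOf t ∧ E.DivAtomOf s ∧ a ≠ b ∧
        (pre E A a b).getD ((pre E A b a).getD A) ≤ comp t s
    then (if y = a then some t else if y = b then some s else none)
    else none
termination_by x _ => x.depth
decreasing_by
  · simp [Vt.depth]
  · simp [Vt.depth]

open Classical in
/-- The total coloring of pairs of vertices by atoms of `E`. -/
noncomputable def col (E : NA.Subalgebra α) (A : α) (x y : Vt α) : α :=
  if x = y then (ide : α) else (pre E A x y).getD ((pre E A y x).getD A)

lemma col_self (E : NA.Subalgebra α) (A : α) (x : Vt α) : col E A x x = (ide : α) :=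
  if_pos rfl

lemma col_of_ne {E : NA.Subalgebra α} {A : α} {x y : Vt α} (h : x ≠ y) :
    col E A x y = (pre E A x y).getD ((pre E A y x).getD A) := if_neg h

/-- The validity condition of a witness vertex. -/
def Valid (E : NA.Subalgebra α) (A : α) (a b : Vt α) (t s : α) : Prop :=
  E.DivAtomOf t ∧ E.DivAtomOf s ∧ a ≠ b ∧ col E A a b ≤ comp t s

open Classical in
lemma pre_wit (E : NA.Subalgebra α) (A : α) (a b : Vt α) (t s : α) (y : Vt α) :
    pre E A (.wit a b t s) y =
      if Valid E A a b t s
      then (if y = a then some t else if y = b then some s else none)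
      else none := by
  rw [pre]
  by_cases h : Valid E A a b t s
  · rw [if_pos h]
    rw [if_pos]
    obtain ⟨h1, h2, h3, h4⟩ := h
    exact ⟨h1, h2, h3, by rwa [col_of_ne h3] at h4⟩
  · rw [if_neg h]
    rw [if_neg]
    intro ⟨h1, h2, h3, h4⟩
    exact h ⟨h1, h2, h3, by rwa [col_of_ne h3]⟩

lemma pre_base (E : NA.Subalgebra α) (A : α) (y : Vt α) :
    pre E A .base y = none := by rw [pre]

/-- Characterization of defined partial colors. -/
lemma pre_some {E : NA.Subalgebra α} {A : α} {x y : Vt α} {c : α}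
    (h : pre E A x y = some c) :
    ∃ a b t s, x = .wit a b t s ∧ Valid E A a b t s ∧
      ((y = a ∧ c = t) ∨ (y ≠ a ∧ y = b ∧ c = s)) := by
  classical
  cases x with
  | base => rw [pre_base] at h; exact absurd h (by simp)
  | wit a b t s =>
    rw [pre_wit] at h
    by_cases hv : Valid E A a b t s
    · rw [if_pos hv] at h
      refine ⟨a, b, t, s, rfl, hv, ?_⟩
      by_cases hya : y = a
      · rw [if_pos hya] at h
        exact Or.inl ⟨hya, (Option.some_inj.mp h).symm⟩
      · rw [if_neg hya] at h
        by_cases hyb : y = b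
        · rw [if_pos hyb] at h
          exact Or.inr ⟨hya, hyb, (Option.some_inj.mp h).symm⟩
        · rw [if_neg hyb] at h; exact absurd h (by simp)
    · rw [if_neg hv] at h; exact absurd h (by simp)

lemma pre_some_depth {E : NA.Subalgebra α} {A : α} {x y : Vt α} {c : α}
    (h : pre E A x y = some c) : y.depth < x.depth := by
  obtain ⟨a, b, t, s, hx, _, hy⟩ := pre_some h
  subst hx
  rcases hy with ⟨hy, _⟩ | ⟨_, hy, _⟩ <;> subst hy <;> simp [Vt.depth] <;> omega

lemma pre_none_of_depth {E : NA.Subalgebra α} {A : α} {x y : Vt α}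
    (h : ¬ y.depth < x.depth) : pre E A x y = none := by
  cases hp : pre E A x y with
  | none => rfl
  | some c => exact absurd (pre_some_depth hp) h

lemma col_symm (E : NA.Subalgebra α) (A : α) (x y : Vt α) :
    col E A x y = col E A y x := by
  by_cases hxy : x = y
  · rw [hxy]
  rw [col_of_ne hxy, col_of_ne (Ne.symm hxy)]
  cases hp : pre E A x y with
  | none =>
    cases hq : pre E A y x with
    | none => simp
    | some c => simp
  | some c =>
    cases hq : pre E A y x with
    | none => simp
    | some d =>
      exact absurd (pre_some_depth hq) (Nat.lt_asymm (pre_some_depth hp))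

lemma ne_of_depth {x y : Vt α} (h : x.depth ≠ y.depth) : x ≠ y :=
  fun he => h (he ▸ rfl)

lemma col_atomOf (hint : Integral α) {E : NA.Subalgebra α} {A : α}
    (hA : E.DivAtomOf A) (x y : Vt α) : E.AtomOf (col E A x y) := by
  by_cases hxy : x = y
  · rw [hxy, col_self]; exact eatom_ide hint E.ide_mem
  rw [col_of_ne hxy]
  cases hp : pre E A x y with
  | some c =>
    obtain ⟨a, b, t, s, _, hv, hy⟩ := pre_some hp
    simp only [Option.getD_some]
    rcases hy with ⟨_, rfl⟩ | ⟨_, _, rfl⟩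
    · exact hv.1.1
    · exact hv.2.1.1
  | none =>
    cases hq : pre E A y x with
    | some c =>
      obtain ⟨a, b, t, s, _, hv, hy⟩ := pre_some hq
      simp only [Option.getD_some, Option.getD_none]
      rcases hy with ⟨_, rfl⟩ | ⟨_, _, rfl⟩
      · exact hv.1.1
      · exact hv.2.1.1
    | none => simp only [Option.getD_none]; exact hA.1

lemma col_divAtomOf (hint : Integral α) {E : NA.Subalgebra α} {A : α}
    (hA : E.DivAtomOf A) {x y : Vt α} (hxy : x ≠ y) : E.DivAtomOf (col E A x y) := by
  rw [col_of_ne hxy]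
  cases hp : pre E A x y with
  | some c =>
    obtain ⟨a, b, t, s, _, hv, hy⟩ := pre_some hp
    simp only [Option.getD_some]
    rcases hy with ⟨_, rfl⟩ | ⟨_, _, rfl⟩
    · exact hv.1
    · exact hv.2.1
  | none =>
    cases hq : pre E A y x with
    | some c =>
      obtain ⟨a, b, t, s, _, hv, hy⟩ := pre_some hq
      simp only [Option.getD_some, Option.getD_none]
      rcases hy with ⟨_, rfl⟩ | ⟨_, _, rfl⟩
      · exact hv.1
      · exact hv.2.1
    | none => simp only [Option.getD_none]; exact hA

lemma pre_of_col_ne {E : NA.Subalgebra α} {A : α} {x y : Vt α} (hxy : x ≠ y)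
    (h : col E A x y ≠ A) :
    (pre E A x y = some (col E A x y) ∧ y.depth < x.depth) ∨
    (pre E A y x = some (col E A x y) ∧ x.depth < y.depth) := by
  rw [col_of_ne hxy] at h ⊢
  cases hp : pre E A x y with
  | some c => exact Or.inl ⟨by simp, pre_some_depth hp⟩
  | none =>
    cases hq : pre E A y x with
    | some c => exact Or.inr ⟨by simp, pre_some_depth hq⟩
    | none => rw [hp, hq] at h; simp at h

/-- No monochromatic triangle in a color whose square is its complement. -/
lemma no_mono {E : NA.Subalgebra α} {A : α} {u v w : Vt α} {t : α}
    (huv : u ≠ v) (hu : pre E A w u = some t) (hv : pre E A w v = some t)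
    (hcol : col E A u v = t) (hcomp : comp t t = tᶜ) (htb : t ≠ ⊥) : False := by
  obtain ⟨a, b, p, r, hw, hval, hyu⟩ := pre_some hu
  obtain ⟨a', b', p', r', hw', hval', hyv⟩ := pre_some hv
  rw [hw] at hw'
  injection hw' with e1 e2 e3 e4
  subst e1; subst e2; subst e3; subst e4
  have hab : col E A a b ≤ comp p r := hval.2.2.2
  have hkey : p = t ∧ r = t ∧ ((u = a ∧ v = b) ∨ (u = b ∧ v = a)) := by
    rcases hyu with ⟨hua, hpt⟩ | ⟨hua, hub, hrt⟩
    · rcases hyv with ⟨hva, _⟩ | ⟨_, hvb, hrt2⟩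
      · exact absurd (hua.trans hva.symm) huv
      · exact ⟨hpt.symm, hrt2.symm, Or.inl ⟨hua, hvb⟩⟩
    · rcases hyv with ⟨hva, hpt⟩ | ⟨_, hvb, _⟩
      · exact ⟨hpt.symm, hrt.symm, Or.inr ⟨hub, hva⟩⟩
      · exact absurd (hub.trans hvb.symm) huv
  obtain ⟨hpt, hrt, hcase⟩ := hkey
  rw [hpt, hrt] at hab
  have hcolab : col E A a b = t := by
    rcases hcase with ⟨hh1, hh2⟩ | ⟨hh1, hh2⟩
    · rw [← hh1, ← hh2]; exact hcol
    · rw [← hh1, ← hh2, col_symm]; exact hcol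
  rw [hcolab, hcomp] at hab
  have hbb : t ≤ ⊥ := by
    have := le_inf (le_refl t) hab
    rwa [inf_compl_eq_bot] at this
  exact htb (le_bot_iff.mp hbb)

/-- Soundness of the coloring: every triangle is consistent. -/
lemma col_sound [Fintype α] {q : ℕ} {e : Fin q → α} (hE : NA.IsE23 q e)
    {E : NA.Subalgebra α} {A : α} (hA : E.DivAtomOf A) (hAtop : comp A A = ⊤)
    (x y z : Vt α) : col E A x z ≤ comp (col E A x y) (col E A y z) := by
  by_cases hxy : x = y
  · subst hxy; rw [col_self, ide_comp]
  by_cases hyz : y = z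
  · subst hyz; rw [col_self, comp_ide]
  by_cases hxz : x = z
  · subst hxz
    rw [col_self]
    rw [col_symm E A y x]
    exact ide_le_comp_self hE.1 hE.2.1 (col_divAtomOf hE.2.1 hA hxy).1.2.1
  -- three distinct vertices
  have h1 := col_divAtomOf hE.2.1 hA hxy
  have h2 := col_divAtomOf hE.2.1 hA hyz
  have h3 := col_divAtomOf hE.2.1 hA hxz
  by_cases h12 : col E A x y = col E A y z
  · rw [← h12]
    rcases divatom_comp_self hE h1 with hc | hc
    · rw [hc]; exact le_top
    · rw [hc.2]
      rw [eatom_le_compl_iff h3.1 h1.1.1]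
      intro hle
      have h31 : col E A x z = col E A x y := eatom_le_eatom h3.1 h1.1 hle
      have htb : col E A x y ≠ ⊥ := h1.1.2.1
      have htA : col E A x y ≠ A := flex_ne_nonflex hA hAtop hc.2 htb
      have e2 : col E A y z ≠ A := by rw [← h12]; exact htA
      have e3 : col E A x z ≠ A := by rw [h31]; exact htA
      rcases pre_of_col_ne hxy htA with ⟨p1, d1⟩ | ⟨p1, d1⟩ <;>
        rcases pre_of_col_ne hyz e2 with ⟨p2, d2⟩ | ⟨p2, d2⟩ <;>
          rcases pre_of_col_ne hxz e3 with ⟨p3, d3⟩ | ⟨p3, d3⟩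
      · -- x deepest
        rw [h31] at p3
        exact no_mono hyz p1 p3 h12.symm hc.2 htb
      · omega
      · -- x deepest
        rw [h31] at p3
        exact no_mono hyz p1 p3 h12.symm hc.2 htb
      · -- z deepest
        rw [← h12] at p2
        rw [h31] at p3
        exact no_mono (Ne.symm hxy) p2 p3 (by rw [col_symm]) hc.2 htb
      · -- y deepest
        rw [← h12] at p2
        exact no_mono hxz p1 p2 h31 hc.2 htb
      · -- y deepest
        rw [← h12] at p2
        exact no_mono hxz p1 p2 h31 hc.2 htb
      · omega
      · -- z deepest
        rw [← h12] at p2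
        rw [h31] at p3
        exact no_mono (Ne.symm hxy) p2 p3 (by rw [col_symm]) hc.2 htb
  · rw [divatom_comp_ne hE h1 h2 h12]
    exact h3.2

lemma col_eq_of_pre {E : NA.Subalgebra α} {A : α} {x y : Vt α} {c : α}
    (h : pre E A x y = some c) : col E A x y = c := by
  have hd := pre_some_depth h
  have hxy : x ≠ y := fun he => by rw [he] at hd; omega
  rw [col_of_ne hxy, h]
  simp

lemma valid_pre_left {E : NA.Subalgebra α} {A : α} {a b : Vt α} {t s : α}
    (h : Valid E A a b t s) : pre E A (.wit a b t s) a = some t := by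
  rw [pre_wit, if_pos h, if_pos rfl]

lemma valid_pre_right {E : NA.Subalgebra α} {A : α} {a b : Vt α} {t s : α}
    (h : Valid E A a b t s) : pre E A (.wit a b t s) b = some s := by
  rw [pre_wit, if_pos h]
  by_cases hba : b = a
  · exact absurd hba.symm h.2.2.1
  · rw [if_neg hba, if_pos rfl]

lemma depth_lt_wit_left (a b : Vt α) (t s : α) :
    a.depth < (Vt.wit a b t s).depth := by simp [Vt.depth]

lemma depth_lt_wit_right (a b : Vt α) (t s : α) :
    b.depth < (Vt.wit a b t s).depth := by simp [Vt.depth]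

lemma col_wit_left {E : NA.Subalgebra α} {A : α} {a b : Vt α} {t s : α}
    (h : Valid E A a b t s) : col E A a (.wit a b t s) = t := by
  rw [col_symm]
  exact col_eq_of_pre (valid_pre_left h)

lemma col_wit_right {E : NA.Subalgebra α} {A : α} {a b : Vt α} {t s : α}
    (h : Valid E A a b t s) : col E A (.wit a b t s) b = s :=
  col_eq_of_pre (valid_pre_right h)

/-- The witness property of the coloring. -/
lemma col_witness [Fintype α] {q : ℕ} {e : Fin q → α} (hE : NA.IsE23 q e)
    {E : NA.Subalgebra α} {A : α} (hA : E.DivAtomOf A) (hAtop :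
    comp A A = ⊤) {x y : Vt α} {t s : α} (ht : E.AtomOf t) (hs : E.AtomOf s)
    (h : col E A x y ≤ comp t s) : ∃ z, col E A x z = t ∧ col E A z y = s := by
  have hint : Integral α := hE.2.1
  rcases eatom_ide_or_div hint ht with hti | htd
  · subst hti
    rw [ide_comp] at h
    have : col E A x y = s := eatom_le_eatom (col_atomOf hint hA x y) hs h
    exact ⟨x, col_self E A x, this⟩
  rcases eatom_ide_or_div hint hs with hsi | hsd
  · subst hsi
    rw [comp_ide] at h
    have : col E A x y = t := eatom_le_eatom (col_atomOf hint hA x y) ht h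
    exact ⟨y, this, col_self E A y⟩
  by_cases hxy : x = y
  · -- reflexive case: need t = s
    subst hxy
    rw [col_self] at h
    have hts : t = s := by
      by_contra hne
      rw [divatom_comp_ne hE htd hsd hne] at h
      have : (ide : α) ≤ ⊥ := by
        have := le_inf (le_refl (ide : α)) h
        rwa [NA.div, inf_compl_eq_bot] at this
      exact hint.1 (le_bot_iff.mp this)
    subst hts
    set u : Vt α := Vt.wit x x t t with hu
    have hux : x ≠ u := by
      apply ne_of_depth
      have := depth_lt_wit_left x x t t
      rw [← hu] at this
      omega
    have hpreu : ∀ w, pre E A u w = none := by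
      intro w
      rw [hu, pre_wit, if_neg]
      intro hv
      exact hv.2.2.1 rfl
    have hprexu : pre E A x u = none := by
      apply pre_none_of_depth
      have := depth_lt_wit_left x x t t
      rw [← hu] at this
      omega
    have hcolxu : col E A x u = A := by
      rw [col_of_ne hux, hprexu, hpreu x]
      simp
    have hval : Valid E A x u t t :=
      ⟨htd, htd, hux, by rw [hcolxu]; exact flex_le_comp_self hE hA hAtop htd⟩
    refine ⟨Vt.wit x u t t, col_wit_left hval, ?_⟩
    rw [col_symm]
    exact col_wit_left hval
  · have hval : Valid E A x y t s := ⟨htd, hsd, hxy, h⟩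
    exact ⟨Vt.wit x y t s, col_wit_left hval, col_wit_right hval⟩

lemma finsetSup_comp {γ : Type*} {F : Finset γ} {f : γ → α} (b : α) :
    comp (F.sup f) b = F.sup (fun c => comp (f c) b) := by
  classical
  induction F using Finset.induction_on with
  | empty => simpa using bot_comp b
  | insert c F hni ih =>
    rw [Finset.sup_insert, Finset.sup_insert, sup_comp, ih]

lemma comp_finsetSup {γ : Type*} {F : Finset γ} {f : γ → α} (a : α) :
    comp a (F.sup f) = F.sup (fun c => comp a (f c)) := by
  classical
  induction F using Finset.induction_on with
  | empty => simpa using comp_bot a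
  | insert c F hni ih =>
    rw [Finset.sup_insert, Finset.sup_insert, comp_sup, ih]

open Classical in
lemma comp_decomp [Fintype α] {E : NA.Subalgebra α} {a b t0 : α}
    (ha : a ∈ E.carrier) (hb : b ∈ E.carrier) (ht0 : E.AtomOf t0)
    (h : t0 ≤ comp a b) :
    ∃ t s : α, E.AtomOf t ∧ E.AtomOf s ∧ t ≤ a ∧ s ≤ b ∧ t0 ≤ comp t s := by
  classical
  have hda := eq_sup_eatoms (E := E) ha
  have hdb := eq_sup_eatoms (E := E) hb
  set Fa := ({x ∈ Finset.univ | E.AtomOf x ∧ x ≤ a} : Finset α) with hFa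
  set Fb := ({x ∈ Finset.univ | E.AtomOf x ∧ x ≤ b} : Finset α) with hFb
  have h1 : t0 ≤ Fa.sup (fun t => comp t b) := by
    rw [← finsetSup_comp]
    rw [hda] at h
    exact h
  obtain ⟨t, htmem, ht⟩ := eatom_le_finsetSup ht0
    (fun c hc => by
      simp only [hFa, Finset.mem_filter] at hc
      exact E.comp_mem c hc.2.1.1 b hb) h1
  simp only [hFa, Finset.mem_filter, Finset.mem_univ, true_and] at htmem
  have h2 : t0 ≤ Fb.sup (fun s => comp t s) := by
    rw [← comp_finsetSup]
    rw [hdb] at ht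
    exact ht
  obtain ⟨s, hsmem, hss⟩ := eatom_le_finsetSup ht0
    (fun c hc => by
      simp only [hFb, Finset.mem_filter] at hc
      exact E.comp_mem t htmem.1.1 c hc.2.1.1) h2
  simp only [hFb, Finset.mem_filter, Finset.mem_univ, true_and] at hsmem
  exact ⟨t, s, htmem.1, hsmem.1, htmem.2, hsmem.2, hss⟩

/-- Every atom of `E` is realized as the color of some pair. -/
lemma col_realized [Fintype α] {q : ℕ} {e : Fin q → α} (hE : NA.IsE23 q e)
    {E : NA.Subalgebra α} {A : α} (hA : E.DivAtomOf A) (hAtop : comp A A = ⊤)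
    {t : α} (ht : E.AtomOf t) : ∃ z : Vt α, col E A Vt.base z = t := by
  have hint : Integral α := hE.2.1
  have hi : (ide : α) ≤ comp t t := by
    rcases eatom_ide_or_div hint ht with h | h
    · subst h; rw [comp_ide]
    · exact ide_le_comp_self hE.1 hint h.1.2.1
  have h0 : col E A Vt.base Vt.base ≤ comp t t := by rw [col_self]; exact hi
  obtain ⟨z, hz, _⟩ := col_witness hE hA hAtop ht ht h0
  exact ⟨z, hz⟩

end StmtAux

/-- Every proper subalgebra of E^{23}_q contains a flexible atom,
and hence every proper subalgebra of E^{23}_q is representable. -/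
theorem stmt2 {α : Type} [RA α] [Fintype α] (q : ℕ) (hq : 4 ≤ q)
    (e : Fin q → α) (hE : NA.IsE23 q e)
    (E : NA.Subalgebra α) (hproper : E.carrier ≠ Set.univ) :
    (∃ a : α, NA.FlexibleOf E a) ∧
    ∃ X : Type, Nonempty (NA.SubRepresentation E X) := by
  classical
  obtain ⟨A, hA, hAtop⟩ := StmtAux.exists_flexible hE hproper
  have hint : NA.Integral α := hE.2.1
  constructor
  · exact ⟨A, hA, hAtop, fun x hx hne => StmtAux.divatom_comp_ne hE hx hA hne⟩
  refine ⟨StmtAux.Vt α, ⟨?_⟩⟩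
  refine
    { toFun := fun a =>
        {p : StmtAux.Vt α × StmtAux.Vt α | StmtAux.col E A p.1 p.2 ≤ a}
      inj := ?_, map_sup := ?_, map_compl := ?_, map_comp := ?_
      map_conv := ?_, map_ide := ?_ }
  · -- injectivity on E
    intro a ha b hb hfun
    have hfun' : {p : StmtAux.Vt α × StmtAux.Vt α | StmtAux.col E A p.1 p.2 ≤ a}
        = {p : StmtAux.Vt α × StmtAux.Vt α | StmtAux.col E A p.1 p.2 ≤ b} := hfun
    have key : ∀ t : α, E.AtomOf t → (t ≤ a ↔ t ≤ b) := by
      intro t ht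
      obtain ⟨z, hz⟩ := StmtAux.col_realized hE hA hAtop ht
      constructor <;> intro hle
      · have hmem : (StmtAux.Vt.base, z) ∈
            {p : StmtAux.Vt α × StmtAux.Vt α | StmtAux.col E A p.1 p.2 ≤ a} := by
          simp only [Set.mem_setOf_eq]; rw [hz]; exact hle
        rw [hfun'] at hmem
        simp only [Set.mem_setOf_eq] at hmem
        rwa [hz] at hmem
      · have hmem : (StmtAux.Vt.base, z) ∈
            {p : StmtAux.Vt α × StmtAux.Vt α | StmtAux.col E A p.1 p.2 ≤ b} := by
          simp only [Set.mem_setOf_eq]; rw [hz]; exact hle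
        rw [← hfun'] at hmem
        simp only [Set.mem_setOf_eq] at hmem
        rwa [hz] at hmem
    rw [StmtAux.eq_sup_eatoms (E := E) ha, StmtAux.eq_sup_eatoms (E := E) hb]
    have : ({x ∈ Finset.univ | E.AtomOf x ∧ x ≤ a} : Finset α)
        = ({x ∈ Finset.univ | E.AtomOf x ∧ x ≤ b} : Finset α) := by
      ext t
      simp only [Finset.mem_filter, Finset.mem_univ, true_and]
      constructor
      · rintro ⟨h1, h2⟩; exact ⟨h1, (key t h1).mp h2⟩
      · rintro ⟨h1, h2⟩; exact ⟨h1, (key t h1).mpr h2⟩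
    rw [this]
  · -- map_sup
    intro x hx y hy
    ext p
    simp only [Set.mem_setOf_eq, Set.mem_union]
    constructor
    · intro h
      exact StmtAux.eatom_le_sup (StmtAux.col_atomOf hint hA p.1 p.2) hx hy h
    · rintro (h | h)
      · exact h.trans le_sup_left
      · exact h.trans le_sup_right
  · -- map_compl
    intro x hx
    ext p
    simp only [Set.mem_setOf_eq, Set.mem_diff]
    rw [StmtAux.eatom_le_compl_iff (StmtAux.col_atomOf hint hA p.1 p.2) hx]
    constructor
    · intro h; exact ⟨le_top, h⟩
    · intro h; exact h.2
  · -- map_comp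
    intro x hx y hy
    ext p
    simp only [Set.mem_setOf_eq]
    constructor
    · intro h
      obtain ⟨t, s, ht, hs, hta, hsb, h0⟩ := StmtAux.comp_decomp hx hy
        (StmtAux.col_atomOf hint hA p.1 p.2) h
      obtain ⟨z, hz1, hz2⟩ := StmtAux.col_witness hE hA hAtop ht hs h0
      exact ⟨z, by rw [hz1]; exact hta, by rw [hz2]; exact hsb⟩
    · rintro ⟨z, h1, h2⟩
      exact (StmtAux.col_sound hE hA hAtop p.1 z p.2).trans
        (StmtAux.comp_le_comp h1 h2)
  · -- map_conv
    intro x hx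
    rw [hE.1 x]
    ext p
    simp only [Set.mem_setOf_eq]
    rw [StmtAux.col_symm]
  · -- map_ide
    ext p
    simp only [Set.mem_setOf_eq]
    constructor
    · intro h
      refine ⟨le_top, ?_⟩
      by_contra hne
      have hd := StmtAux.col_divAtomOf hint hA hne
      have : StmtAux.col E A p.1 p.2 ≤ (⊥ : α) := by
        have := le_inf h hd.2
        rwa [NA.div, inf_compl_eq_bot] at this
      exact hd.1.2.1 (le_bot_iff.mp this)
    · rintro ⟨-, h⟩
      have : StmtAux.col E A p.1 p.2 = NA.ide := by rw [h, StmtAux.col_self]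
      rw [this]
end

section
/- Every subalgebra of E^{23}_q is characterized by two parameters α (the number of diversity atoms a with a;a = complement(a)) and β (the number of diversity atoms a with a;a = 1), where the subalgebra has 1 + α + β atoms, and these parameters satisfy α + 2β < q and 0 < α + β. Moreover, in any subalgebra of E^{23}_q, every diversity atom a satisfies either a;a = 1 or a;a = complement(a), and distinct diversity atoms a, b of the subalgebra satisfy a;b = 0'. -/
universe u v

section StmtThreeHelpers

variable {α : Type} [NA α]

lemma my_le_compl_self {x : α} (h : x ≤ xᶜ) : x = ⊥ := by
  have h2 : x ≤ x ⊓ xᶜ := le_inf le_rfl h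
  rw [inf_compl_eq_bot] at h2
  exact le_bot_iff.mp h2

lemma my_atom_disjoint {x y : α} (hx : IsAtom x) (hy : IsAtom y) (h : x ≠ y) :
    x ⊓ y = ⊥ := by
  rcases hy.le_iff.mp (inf_le_right : x ⊓ y ≤ y) with h' | h'
  · exact h'
  · have hyx : y ≤ x := h' ▸ inf_le_left
    exact absurd ((hx.le_iff.mp hyx).resolve_left hy.1).symm h

lemma my_comp_mono {a b c d : α} (h1 : a ≤ c) (h2 : b ≤ d) :
    NA.comp a b ≤ NA.comp c d := by
  have e1 : NA.comp c d = NA.comp c b ⊔ NA.comp c d := by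
    rw [← NA.comp_sup, sup_eq_right.mpr h2]
  have e2 : NA.comp c b = NA.comp a b ⊔ NA.comp c b := by
    rw [← NA.sup_comp, sup_eq_right.mpr h1]
  calc NA.comp a b ≤ NA.comp c b := e2 ▸ le_sup_left
    _ ≤ NA.comp c d := e1 ▸ le_sup_left

lemma my_inf_mem (E : NA.Subalgebra α) {x y : α} (hx : x ∈ E.carrier)
    (hy : y ∈ E.carrier) : x ⊓ y ∈ E.carrier := by
  have h : x ⊓ y = (xᶜ ⊔ yᶜ)ᶜ := by rw [compl_sup, compl_compl, compl_compl]
  rw [h]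
  exact E.compl_mem _ (E.sup_mem _ (E.compl_mem _ hx) _ (E.compl_mem _ hy))

end StmtThreeHelpers


/-- Every subalgebra of E^{23}_q is characterized by the two
parameters α (number of diversity atoms with a;a = aᶜ) and β (number of
diversity atoms with a;a = 1); it has 1 + α + β atoms, α + 2β < q and
0 < α + β; moreover every diversity atom a of the subalgebra satisfies
a;a = 1 or a;a = aᶜ, and distinct diversity atoms multiply to 0'. -/
theorem stmt3 {α : Type} [RA α] [Fintype α] (q : ℕ) (hq : 4 ≤ q)
    (e : Fin q → α) (hE : NA.IsE23 q e) (E : NA.Subalgebra α) :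
    (∀ a : α, E.DivAtomOf a → NA.comp a a = ⊤ ∨ NA.comp a a = aᶜ) ∧
    (∀ a b : α, E.DivAtomOf a → E.DivAtomOf b → a ≠ b →
      NA.comp a b = (NA.div : α)) ∧
    Nat.card {a : α // E.AtomOf a} =
      1 + Nat.card {a : α // E.DivAtomOf a ∧ NA.comp a a = aᶜ} +
        Nat.card {a : α // E.DivAtomOf a ∧ NA.comp a a = ⊤} ∧
    Nat.card {a : α // E.DivAtomOf a ∧ NA.comp a a = aᶜ} +
      2 * Nat.card {a : α // E.DivAtomOf a ∧ NA.comp a a = ⊤} < q ∧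
    0 < Nat.card {a : α // E.DivAtomOf a ∧ NA.comp a a = aᶜ} +
      Nat.card {a : α // E.DivAtomOf a ∧ NA.comp a a = ⊤}  := by
  classical
  obtain ⟨hsym, hint, hinj, hide0, hatome, hall, hdiv2, hdiv1⟩ := hE
  have i0 : Fin q := ⟨0, by omega⟩
  have hdivc : (NA.div : α) = (NA.ide : α)ᶜ := rfl
  -- every atom below div is some e i with i ≠ 0
  have key0 : ∀ x : α, IsAtom x → x ≤ (NA.div : α) →
      ∃ i : Fin q, x = e i ∧ (i : ℕ) ≠ 0 := by
    intro x hx hxd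
    obtain ⟨i, hi⟩ := hall x hx
    refine ⟨i, hi, ?_⟩
    intro h0
    have hxide : x = NA.ide := by rw [hi, hide0 i h0]
    have : x ≤ xᶜ := by rw [hxide] at hxd ⊢; exact hxd
    exact hx.1 (my_le_compl_self this)
  have atomBelow : ∀ x : α, x ≠ ⊥ → ∃ a : α, IsAtom a ∧ a ≤ x := by
    intro x hx
    exact (IsAtomic.eq_bot_or_exists_atom_le x).resolve_left hx
  -- two distinct atoms below any non-atom nonzero element
  have twoAtoms : ∀ a : α, a ≠ ⊥ → ¬ IsAtom a →
      ∃ x y : α, IsAtom x ∧ IsAtom y ∧ x ≤ a ∧ y ≤ a ∧ x ≠ y := by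
    intro a ha hna
    obtain ⟨x, hx, hxa⟩ := atomBelow a ha
    have hax : a ⊓ xᶜ ≠ ⊥ := by
      intro h
      have : a ≤ x := by
        have := le_compl_iff_disjoint_right.mpr (disjoint_iff.mpr h)
        rwa [compl_compl] at this
      rcases hx.le_iff.mp this with h' | h'
      · exact ha h'
      · exact hna (h' ▸ hx)
    obtain ⟨y, hy, hya⟩ := atomBelow _ hax
    refine ⟨x, y, hx, hy, hxa, hya.trans inf_le_left, ?_⟩
    intro h
    have hyc : y ≤ xᶜ := hya.trans inf_le_right
    rw [h] at hyc
    exact hy.1 (my_le_compl_self hyc)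
  -- case: a is an atom of the big algebra
  have hcase1 : ∀ a : α, IsAtom a → a ≤ (NA.div : α) → NA.comp a a = aᶜ := by
    intro a ha had
    obtain ⟨i, hi, hi0⟩ := key0 a ha had
    rw [hi]; exact hdiv1 i hi0
  -- case: a is a diversity element, not an atom, with two atoms below
  have hcase2 : ∀ a : α, a ≠ ⊥ → a ≤ (NA.div : α) → ¬ IsAtom a →
      NA.comp a a = ⊤ := by
    intro a ha had hna
    obtain ⟨x, y, hx, hy, hxa, hya, hxy⟩ := twoAtoms a ha hna
    obtain ⟨i, hxi, hi0⟩ := key0 x hx (hxa.trans had)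
    obtain ⟨j, hyj, hj0⟩ := key0 y hy (hya.trans had)
    have hij : i ≠ j := fun h => hxy (by rw [hxi, hyj, h])
    have h1 : (NA.div : α) ≤ NA.comp a a := by
      have : NA.comp x y = (NA.div : α) := by rw [hxi, hyj]; exact hdiv2 i j hi0 hj0 hij
      exact this ▸ my_comp_mono hxa hya
    have h2 : (NA.ide : α) ≤ NA.comp a a := by
      have hxx : NA.comp x x = xᶜ := by rw [hxi]; exact hdiv1 i hi0
      have hix : (NA.ide : α) ≤ xᶜ := by
        rw [hdivc] at had
        exact le_compl_comm.mp (hxa.trans had)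
      exact le_trans (hxx ▸ hix) (my_comp_mono hxa hxa)
    have : (⊤ : α) ≤ NA.comp a a := by
      have := sup_le h2 h1
      rwa [hdivc, sup_compl_eq_top] at this
    exact top_le_iff.mp this
  -- Part 1
  have part1 : ∀ a : α, E.DivAtomOf a →
      NA.comp a a = ⊤ ∨ NA.comp a a = aᶜ := by
    intro a ⟨⟨hac, hab, _⟩, had⟩
    by_cases h : IsAtom a
    · exact Or.inr (hcase1 a h had)
    · exact Or.inl (hcase2 a hab had h)
  -- disjointness of distinct atoms of E
  have hdisj : ∀ a b : α, E.AtomOf a → E.AtomOf b → a ≠ b → a ⊓ b = ⊥ := by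
    intro a b ha hb hab
    have hmem : a ⊓ b ∈ E.carrier := my_inf_mem E ha.1 hb.1
    rcases ha.2.2 _ hmem inf_le_left with h | h
    · exact h
    · have hba : a ≤ b := h ▸ inf_le_right
      rcases hb.2.2 a ha.1 hba with h' | h'
      · exact absurd h' ha.2.1
      · exact absurd h' hab
  -- Part 2
  have part2 : ∀ a b : α, E.DivAtomOf a → E.DivAtomOf b → a ≠ b →
      NA.comp a b = (NA.div : α) := by
    intro a b ha hb hab
    have hiab : a ⊓ b = ⊥ := hdisj a b ha.1 hb.1 hab
    refine le_antisymm ?_ ?_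
    · -- upper bound via Peirce
      have hp : NA.comp a b ⊓ NA.ide = ⊥ := by
        rw [NA.peirce1, hsym a, NA.comp_ide]
        exact hiab
      rw [hdivc]
      exact le_compl_iff_disjoint_right.mpr (disjoint_iff.mpr hp)
    · obtain ⟨x, hx, hxa⟩ := atomBelow a ha.1.2.1
      obtain ⟨y, hy, hyb⟩ := atomBelow b hb.1.2.1
      have hxy : x ≠ y := by
        intro h
        have : x ≤ a ⊓ b := le_inf hxa (h ▸ hyb)
        rw [hiab] at this
        exact hx.1 (le_bot_iff.mp this)
      obtain ⟨i, hxi, hi0⟩ := key0 x hx (hxa.trans ha.2)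
      obtain ⟨j, hyj, hj0⟩ := key0 y hy (hyb.trans hb.2)
      have hij : i ≠ j := fun h => hxy (by rw [hxi, hyj, h])
      have : NA.comp x y = (NA.div : α) := by rw [hxi, hyj]; exact hdiv2 i j hi0 hj0 hij
      exact this ▸ my_comp_mono hxa hyb
  -- characterization of atoms of E
  have hideAtom : E.AtomOf NA.ide :=
    ⟨E.ide_mem, hint.1, fun b _ hb => hint.le_iff.mp hb⟩
  have hAtomIff : ∀ a : α, E.AtomOf a ↔ a = NA.ide ∨ E.DivAtomOf a := by
    intro a
    constructor
    · intro ha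
      have hmem : a ⊓ NA.ide ∈ E.carrier := my_inf_mem E ha.1 E.ide_mem
      rcases ha.2.2 _ hmem inf_le_left with h | h
      · right
        refine ⟨ha, ?_⟩
        rw [hdivc]
        exact le_compl_iff_disjoint_right.mpr (disjoint_iff.mpr h)
      · left
        have hai : a ≤ NA.ide := h ▸ inf_le_right
        exact (hint.le_iff.mp hai).resolve_left ha.2.1
    · rintro (rfl | ha)
      · exact hideAtom
      · exact ha.1
  have hideNotDiv : ¬ E.DivAtomOf NA.ide := by
    rintro ⟨_, h⟩
    rw [hdivc] at h
    exact hint.1 (my_le_compl_self h)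
  -- existence of a diversity atom of E
  have hdivne : (NA.div : α) ≠ ⊥ := by
    intro h
    have h1 : (1 : ℕ) < q := by omega
    have he1 : e ⟨1, h1⟩ ≤ (NA.div : α) := by
      rw [hdivc]
      refine le_compl_iff_disjoint_right.mpr (disjoint_iff.mpr ?_)
      refine my_atom_disjoint (hatome _) hint ?_
      intro hh
      have : (⟨1, h1⟩ : Fin q) = ⟨0, by omega⟩ := hinj (by rw [hh, hide0 ⟨0, by omega⟩ rfl])
      simp at this
    rw [h, le_bot_iff] at he1
    exact (hatome _).1 he1
  have hexDiv : ∃ a : α, E.DivAtomOf a := by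
    have hne : (Finset.univ.filter
        (fun b : α => b ∈ E.carrier ∧ b ≠ ⊥ ∧ b ≤ (NA.div : α))).Nonempty := by
      refine ⟨NA.div, ?_⟩
      simp only [Finset.mem_filter, Finset.mem_univ, true_and]
      exact ⟨E.compl_mem _ E.ide_mem, hdivne, le_refl _⟩
    obtain ⟨m, hm, hmin0⟩ := Finset.exists_minimal hne
    have hmin : ∀ x ∈ Finset.univ.filter
        (fun b : α => b ∈ E.carrier ∧ b ≠ ⊥ ∧ b ≤ (NA.div : α)), ¬ x < m :=
      fun x hx hlt => hlt.not_ge (hmin0 hx hlt.le)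
    simp only [Finset.mem_filter, Finset.mem_univ, true_and] at hm
    refine ⟨m, ⟨hm.1, hm.2.1, ?_⟩, hm.2.2⟩
    intro b hb hbm
    by_cases hb0 : b = ⊥
    · exact Or.inl hb0
    · right
      by_contra hbm'
      refine hmin b ?_ (lt_of_le_of_ne hbm hbm')
      simp only [Finset.mem_filter, Finset.mem_univ, true_and]
      exact ⟨hb, hb0, hbm.trans hm.2.2⟩
  -- counting setup
  set PA : α → Prop := fun a => E.DivAtomOf a ∧ NA.comp a a = aᶜ with hPA
  set PB : α → Prop := fun a => E.DivAtomOf a ∧ NA.comp a a = ⊤ with hPB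
  set Afin : Finset α := Finset.univ.filter PA with hAfin
  set Bfin : Finset α := Finset.univ.filter PB with hBfin
  set Dfin : Finset α := Finset.univ.filter (fun a => E.DivAtomOf a) with hDfin
  have hcardA : Nat.card {a : α // PA a} = Afin.card := by
    rw [Nat.card_eq_fintype_card, hAfin, Fintype.card_subtype]
  have hcardB : Nat.card {a : α // PB a} = Bfin.card := by
    rw [Nat.card_eq_fintype_card, hBfin, Fintype.card_subtype]
  have hABdisj : Disjoint Afin Bfin := by
    rw [Finset.disjoint_left]
    intro a haA haB
    rw [hAfin, Finset.mem_filter] at haA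
    rw [hBfin, Finset.mem_filter] at haB
    have : aᶜ = ⊤ := by rw [← haA.2.2, haB.2.2]
    exact haA.2.1.1.2.1 (compl_eq_top.mp this)
  have hDAB : Dfin = Afin ∪ Bfin := by
    ext a
    simp only [hDfin, hAfin, hBfin, Finset.mem_union, Finset.mem_filter,
      Finset.mem_univ, true_and, hPA, hPB]
    constructor
    · intro ha
      rcases part1 a ha with h | h
      · exact Or.inr ⟨ha, h⟩
      · exact Or.inl ⟨ha, h⟩
    · rintro (⟨h, _⟩ | ⟨h, _⟩) <;> exact h
  have hDcard : Dfin.card = Afin.card + Bfin.card := by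
    rw [hDAB, Finset.card_union_of_disjoint hABdisj]
  -- count of atoms of E
  have hcardAt : Nat.card {a : α // E.AtomOf a} = 1 + Afin.card + Bfin.card := by
    rw [Nat.card_eq_fintype_card, Fintype.card_subtype]
    have : Finset.univ.filter (fun a : α => E.AtomOf a) = insert NA.ide Dfin := by
      ext a
      simp only [Finset.mem_filter, Finset.mem_univ, true_and, Finset.mem_insert, hDfin]
      rw [hAtomIff a]
    rw [this, Finset.card_insert_of_notMem (by
      simp only [hDfin, Finset.mem_filter, Finset.mem_univ, true_and]
      exact hideNotDiv), hDcard]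
    omega
  -- the counting map to indices
  set f : α → Finset (Fin q) := fun a => Finset.univ.filter (fun i => e i ≤ a) with hf
  have hfdisj : ∀ a ∈ Dfin, ∀ b ∈ Dfin, a ≠ b → Disjoint (f a) (f b) := by
    intro a ha b hb hab
    rw [hDfin, Finset.mem_filter] at ha hb
    rw [Finset.disjoint_left]
    intro i hia hib
    rw [hf, Finset.mem_filter] at hia hib
    have : e i ≤ a ⊓ b := le_inf hia.2 hib.2
    rw [hdisj a b ha.2.1 hb.2.1 hab, le_bot_iff] at this
    exact (hatome i).1 this
  have hf1 : ∀ a : α, E.DivAtomOf a → 1 ≤ (f a).card := by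
    intro a ha
    obtain ⟨x, hx, hxa⟩ := atomBelow a ha.1.2.1
    obtain ⟨i, hxi, _⟩ := key0 x hx (hxa.trans ha.2)
    refine Finset.card_pos.mpr ⟨i, ?_⟩
    rw [hf, Finset.mem_filter]
    exact ⟨Finset.mem_univ i, hxi ▸ hxa⟩
  have hf2 : ∀ a : α, E.DivAtomOf a → NA.comp a a = ⊤ → 2 ≤ (f a).card := by
    intro a ha htop
    have hna : ¬ IsAtom a := by
      intro h
      have := hcase1 a h ha.2
      rw [htop] at this
      exact ha.1.2.1 (compl_eq_top.mp this.symm)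
    obtain ⟨x, y, hx, hy, hxa, hya, hxy⟩ := twoAtoms a ha.1.2.1 hna
    obtain ⟨i, hxi, _⟩ := key0 x hx (hxa.trans ha.2)
    obtain ⟨j, hyj, _⟩ := key0 y hy (hya.trans ha.2)
    have hij : i ≠ j := fun h => hxy (by rw [hxi, hyj, h])
    refine Finset.one_lt_card.mpr ⟨i, ?_, j, ?_, hij⟩ <;>
      rw [hf, Finset.mem_filter]
    · exact ⟨Finset.mem_univ i, hxi ▸ hxa⟩
    · exact ⟨Finset.mem_univ j, hyj ▸ hya⟩
  -- the union of the index sets avoids 0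
  have hbound : (Dfin.biUnion f).card ≤ q - 1 := by
    have hsub : Dfin.biUnion f ⊆ Finset.univ.erase ⟨0, by omega⟩ := by
      intro i hi
      rw [Finset.mem_biUnion] at hi
      obtain ⟨a, ha, hia⟩ := hi
      rw [hf, Finset.mem_filter] at hia
      rw [hDfin, Finset.mem_filter] at ha
      refine Finset.mem_erase.mpr ⟨?_, Finset.mem_univ i⟩
      intro h0
      have : e i = NA.ide := hide0 i (by rw [h0])
      have hle : (NA.ide : α) ≤ (NA.div : α) := by
        rw [← this]; exact hia.2.trans ha.2.2
      rw [hdivc] at hle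
      exact hint.1 (my_le_compl_self hle)
    calc (Dfin.biUnion f).card ≤ (Finset.univ.erase (⟨0, by omega⟩ : Fin q)).card :=
        Finset.card_le_card hsub
      _ = q - 1 := by rw [Finset.card_erase_of_mem (Finset.mem_univ _)]; simp
  have hsum : Afin.card + 2 * Bfin.card ≤ (Dfin.biUnion f).card := by
    rw [Finset.card_biUnion hfdisj, hDAB,
      Finset.sum_union hABdisj]
    have h1 : Afin.card ≤ ∑ a ∈ Afin, (f a).card := by
      calc Afin.card = ∑ _a ∈ Afin, 1 := by simp
        _ ≤ ∑ a ∈ Afin, (f a).card := by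
          refine Finset.sum_le_sum ?_
          intro a ha
          rw [hAfin, Finset.mem_filter] at ha
          exact hf1 a ha.2.1
    have h2 : 2 * Bfin.card ≤ ∑ a ∈ Bfin, (f a).card := by
      calc 2 * Bfin.card = ∑ _a ∈ Bfin, 2 := by
            rw [Finset.sum_const, smul_eq_mul, mul_comm]
        _ ≤ ∑ a ∈ Bfin, (f a).card := by
          refine Finset.sum_le_sum ?_
          intro a ha
          rw [hBfin, Finset.mem_filter] at ha
          exact hf2 a ha.2.1 ha.2.2
    omega
  have hlt : Afin.card + 2 * Bfin.card < q := by omega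
  have hpos : 0 < Afin.card + Bfin.card := by
    obtain ⟨a, ha⟩ := hexDiv
    have : a ∈ Dfin := by
      rw [hDfin, Finset.mem_filter]
      exact ⟨Finset.mem_univ a, ha⟩
    have := Finset.card_pos.mpr ⟨a, this⟩
    omega
  exact ⟨part1, part2, by rw [hcardAt, hcardA, hcardB],
    by rw [hcardA, hcardB]; exact hlt,
    by rw [hcardA, hcardB]; exact hpos⟩
end

section
/- For finite symmetric integral relation algebras E ⊆ A, the map a ↦ J(a,0) is an embedding of A into the complete atomic non-associative relation algebra C_E(A); in particular, for diversity atoms x, y, z of A and any index k ∈ ω, the atom z^(k) lies below J(x,0);J(y,0) in C_E(A) if and only if z ≤ x;y in A. -/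
universe u v

section Helpers

open NA

variable {α : Type} [NA α]

lemma hcomp_bot (a : α) : comp a (⊥ : α) = ⊥ := by
  have h := (peirce1 a ⊥ (comp a ⊥)).mpr (by simp)
  simpa using h

lemma hbot_comp (a : α) : comp (⊥ : α) a = ⊥ := by
  have h := (peirce2 ⊥ a (comp ⊥ a)).mpr (by simp)
  simpa using h

lemma hcomp_mono {a a' b b' : α} (ha : a ≤ a') (hb : b ≤ b') :
    comp a b ≤ comp a' b' := by
  have h1 : comp a b ≤ comp a' b :=
    le_sup_left.trans_eq (by rw [← sup_comp, sup_eq_right.mpr ha])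
  have h2 : comp a' b ≤ comp a' b' :=
    le_sup_left.trans_eq (by rw [← comp_sup, sup_eq_right.mpr hb])
  exact h1.trans h2

lemma hatom_le_sup {x a b : α} (hx : IsAtom x) (h : x ≤ a ⊔ b) :
    x ≤ a ∨ x ≤ b := by
  rcases hx.le_iff.mp (inf_le_left : x ⊓ a ≤ x) with h0 | h0
  · right
    have h1 : x ⊓ (a ⊔ b) = x := inf_eq_left.mpr h
    rw [inf_sup_left, h0, bot_sup_eq] at h1
    exact inf_eq_left.mp h1
  · exact Or.inl (inf_eq_left.mp h0)

lemma hatom_le_compl {x a : α} (hx : IsAtom x) : x ≤ aᶜ ↔ ¬ x ≤ a := by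
  constructor
  · intro h1 h2
    exact hx.1 (le_bot_iff.mp ((le_inf h2 h1).trans inf_compl_eq_bot.le))
  · intro h1
    rcases hatom_le_sup hx (le_top.trans_eq (sup_compl_eq_top (x := a)).symm) with h | h
    · exact absurd h h1
    · exact h

lemma hexists_atom_le [Fintype α] {a : α} (h : a ≠ ⊥) :
    ∃ x : α, IsAtom x ∧ x ≤ a :=
  (IsAtomic.eq_bot_or_exists_atom_le a).resolve_left h

lemma hle_of_atom_le [Fintype α] {a b : α}
    (h : ∀ x : α, IsAtom x → x ≤ a → x ≤ b) : a ≤ b := by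
  by_contra hab
  have h0 : a ⊓ bᶜ ≠ ⊥ := by
    intro h0
    exact hab (sdiff_eq_bot_iff.mp (by rw [sdiff_eq]; exact h0))
  obtain ⟨x, hx, hxle⟩ := hexists_atom_le h0
  have hxb := h x hx (hxle.trans inf_le_left)
  exact hx.1 (le_bot_iff.mp
    ((le_inf hxb (hxle.trans inf_le_right)).trans inf_compl_eq_bot.le))

lemma hext_atoms [Fintype α] {a b : α}
    (h : ∀ x : α, IsAtom x → (x ≤ a ↔ x ≤ b)) : a = b :=
  le_antisymm (hle_of_atom_le fun x hx hxa => (h x hx).mp hxa)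
    (hle_of_atom_le fun x hx hxb => (h x hx).mpr hxb)

lemma hfinsetSup_comp {β : Type} (s : Finset β) (f : β → α) (b : α) :
    comp (s.sup f) b = s.sup (fun i => comp (f i) b) := by
  induction s using Finset.cons_induction with
  | empty => simpa using hbot_comp b
  | cons i s hi ih => rw [Finset.sup_cons, Finset.sup_cons, sup_comp, ih]

lemma hcomp_finsetSup {β : Type} (s : Finset β) (f : β → α) (b : α) :
    comp b (s.sup f) = s.sup (fun i => comp b (f i)) := by
  induction s using Finset.cons_induction with
  | empty => simpa using hcomp_bot b
  | cons i s hi ih => rw [Finset.sup_cons, Finset.sup_cons, comp_sup, ih]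

lemma hatom_le_finsetSup {β : Type} {x : α} (hx : IsAtom x) {s : Finset β}
    {f : β → α} (h : x ≤ s.sup f) : ∃ i ∈ s, x ≤ f i := by
  induction s using Finset.cons_induction with
  | empty => exact absurd (le_bot_iff.mp (by simpa using h)) hx.1
  | cons i s hi ih =>
    rw [Finset.sup_cons] at h
    rcases hatom_le_sup hx h with h | h
    · exact ⟨i, Finset.mem_cons_self i s, h⟩
    · obtain ⟨j, hj, hj2⟩ := ih h
      exact ⟨j, Finset.mem_cons_of_mem hj, hj2⟩

lemma hatom_le_comp [Fintype α] {z a b : α} (hz : IsAtom z)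
    (h : z ≤ comp a b) :
    ∃ x y : α, IsAtom x ∧ IsAtom y ∧ x ≤ a ∧ y ≤ b ∧ z ≤ comp x y := by
  classical
  set S := Finset.univ.filter (fun x : α => IsAtom x ∧ x ≤ a) with hSdef
  set T := Finset.univ.filter (fun y : α => IsAtom y ∧ y ≤ b) with hTdef
  have hS : a ≤ S.sup id :=
    hle_of_atom_le fun x hx hxa => Finset.le_sup (f := id) (by simp [hSdef, hx, hxa])
  have hT : b ≤ T.sup id :=
    hle_of_atom_le fun y hy hyb => Finset.le_sup (f := id) (by simp [hTdef, hy, hyb])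
  have h1 : z ≤ comp (S.sup id) (T.sup id) := h.trans (hcomp_mono hS hT)
  rw [hfinsetSup_comp] at h1
  obtain ⟨x, hxS, hx2⟩ := hatom_le_finsetSup hz h1
  rw [hcomp_finsetSup] at hx2
  obtain ⟨y, hyT, hy2⟩ := hatom_le_finsetSup hz hx2
  simp only [hSdef, Finset.mem_filter, Finset.mem_univ, true_and] at hxS
  simp only [hTdef, Finset.mem_filter, Finset.mem_univ, true_and] at hyT
  exact ⟨x, y, hxS.1, hyT.1, hxS.2, hyT.2, hy2⟩

lemma hatom_ide_or_div (hint : Integral α) {x : α} (hx : IsAtom x) :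
    x = (ide : α) ∨ x ≤ (div : α) := by
  rcases hatom_le_sup hx
      (le_top.trans_eq (sup_compl_eq_top (x := (ide : α))).symm) with h | h
  · exact Or.inl ((hint.le_iff.mp h).resolve_left hx.1)
  · exact Or.inr h

lemma hdivatom_not_ide_le (hint : Integral α) {x : α} (hx : DivAtom x) :
    ¬ (ide : α) ≤ x := fun h =>
  hint.1 (le_bot_iff.mp ((le_inf le_rfl (h.trans hx.2)).trans inf_compl_eq_bot.le))

lemma hdivatom_not_le_ide {x : α} (hx : DivAtom x) : ¬ x ≤ (ide : α) := fun h =>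
  hx.1.1 (le_bot_iff.mp ((le_inf hx.2 h).trans
    (by rw [NA.div, inf_comm]; exact inf_compl_eq_bot.le)))

lemma hide_le_comp_self (hsym : Symmetric α) (hint : Integral α) {x : α}
    (hx : IsAtom x) : (ide : α) ≤ comp x x := by
  have hne : comp x x ⊓ (ide : α) ≠ ⊥ := by
    intro h
    have h2 := (peirce1 x x ide).mp h
    rw [hsym x, comp_ide, inf_idem] at h2
    exact hx.1 h2
  rcases hint.le_iff.mp (inf_le_right : comp x x ⊓ (ide : α) ≤ ide) with h | h
  · exact absurd h hne
  · exact h ▸ inf_le_left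

lemma hinf_ne_bot (hsym : Symmetric α) (hint : Integral α) {a b : α}
    (h : (ide : α) ≤ comp a b) : a ⊓ b ≠ ⊥ := by
  intro h0
  have h1 : comp a b ⊓ (ide : α) ≠ ⊥ := by
    rw [inf_eq_right.mpr h]; exact hint.1
  exact h1 ((peirce1 a b ide).mpr (by rw [hsym a, comp_ide]; exact h0))

lemma hmem_Jel_some {a : α} {p : DAt α × ℕ} :
    (some p : CAtom α) ∈ Jel a 0 ↔ p.1.1 ≤ a := by
  constructor
  · rintro (⟨q, hq, hqa, -⟩ | ⟨h, -⟩)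
    · cases Option.some.inj hq; exact hqa
    · exact absurd h (by simp)
  · intro h
    exact Or.inl ⟨p, rfl, h, Nat.zero_le _⟩

lemma hmem_Jel_none {a : α} :
    (none : CAtom α) ∈ Jel a 0 ↔ (ide : α) ≤ a := by
  simp [Jel]

end Helpers

/-- For finite symmetric integral relation algebras E ⊆ A, the map
a ↦ J(a,0) is an embedding of A into C_E(A); in particular, for diversity atoms
x, y, z of A and k ∈ ω, z^(k) ≤ J(x,0);J(y,0) iff z ≤ x;y. -/
theorem stmt6 {α : Type} [RA α] [Fintype α]
    (hsym : NA.Symmetric α) (hint : NA.Integral α)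
    (E : NA.Subalgebra α) (cov : α → α) (hcov : NA.CoverMap E cov) :
    Function.Injective (fun a : α => NA.Jel a 0) ∧
    (∀ a b : α, NA.Jel (a ⊔ b) 0 = NA.Jel a 0 ∪ NA.Jel b 0) ∧
    (∀ a : α, NA.Jel aᶜ 0 = (NA.Jel a 0)ᶜ) ∧
    NA.Jel (NA.ide : α) 0 = ({none} : Set (NA.CAtom α)) ∧
    (∀ a b : α, NA.Jel (NA.comp a b) 0 = NA.Ccomp cov (NA.Jel a 0) (NA.Jel b 0)) ∧
    (∀ (x y z : α) (k : ℕ) (_ : NA.DivAtom x) (_ : NA.DivAtom y)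
      (hz : NA.DivAtom z),
      some (⟨z, hz⟩, k) ∈ NA.Ccomp cov (NA.Jel x 0) (NA.Jel y 0) ↔
        z ≤ NA.comp x y) :=  by
  refine ⟨?_, ?_, ?_, ?_, ?_, ?_⟩
  · -- injectivity
    intro a b h
    have h' : NA.Jel a 0 = NA.Jel b 0 := h
    apply hext_atoms
    intro x hx
    rcases hatom_ide_or_div hint hx with rfl | hxd
    · rw [← hmem_Jel_none (a := a), ← hmem_Jel_none (a := b), h']
    · rw [← hmem_Jel_some (a := a) (p := (⟨x, hx, hxd⟩, 0)),
        ← hmem_Jel_some (a := b) (p := (⟨x, hx, hxd⟩, 0)), h']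
  · -- sup
    intro a b
    ext w
    cases w with
    | none =>
      simp only [Set.mem_union, hmem_Jel_none]
      constructor
      · exact fun h => hatom_le_sup hint h
      · rintro (h | h)
        · exact h.trans le_sup_left
        · exact h.trans le_sup_right
    | some p =>
      simp only [Set.mem_union, hmem_Jel_some]
      constructor
      · exact fun h => hatom_le_sup p.1.2.1 h
      · rintro (h | h)
        · exact h.trans le_sup_left
        · exact h.trans le_sup_right
  · -- compl
    intro a
    ext w
    cases w with
    | none =>
      simp only [Set.mem_compl_iff, hmem_Jel_none]
      exact hatom_le_compl hint
    | some p =>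
      simp only [Set.mem_compl_iff, hmem_Jel_some]
      exact hatom_le_compl p.1.2.1
  · -- ide
    ext w
    cases w with
    | none => simp [hmem_Jel_none]
    | some p =>
      simp only [hmem_Jel_some, Set.mem_singleton_iff]
      constructor
      · exact fun h => absurd h (hdivatom_not_le_ide p.1.2)
      · exact fun h => absurd h (Option.some_ne_none p)
  · -- comp
    intro a b
    ext w
    constructor
    · intro hw
      cases w with
      | none =>
        have hid := hmem_Jel_none.mp hw
        obtain ⟨t, ht, htle⟩ := hexists_atom_le (hinf_ne_bot hsym hint hid)
        rcases hatom_ide_or_div hint ht with rfl | htd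
        · exact ⟨none, hmem_Jel_none.mpr (htle.trans inf_le_left),
            none, hmem_Jel_none.mpr (htle.trans inf_le_right), trivial⟩
        · exact ⟨some (⟨t, ht, htd⟩, 0), hmem_Jel_some.mpr (htle.trans inf_le_left),
            some (⟨t, ht, htd⟩, 0), hmem_Jel_some.mpr (htle.trans inf_le_right), rfl⟩
      | some r =>
        have hr := hmem_Jel_some.mp hw
        obtain ⟨x, y, hx, hy, hxa, hyb, hzc⟩ := hatom_le_comp r.1.2.1 hr
        rcases hatom_ide_or_div hint hx with rfl | hxd
        · have hrb : r.1.1 ≤ b := (hzc.trans_eq (NA.ide_comp y)).trans hyb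
          exact ⟨none, hmem_Jel_none.mpr hxa, some r, hmem_Jel_some.mpr hrb, rfl⟩
        · rcases hatom_ide_or_div hint hy with rfl | hyd
          · have hra : r.1.1 ≤ a := (hzc.trans_eq (NA.comp_ide x)).trans hxa
            exact ⟨some r, hmem_Jel_some.mpr hra, none, hmem_Jel_none.mpr hyb, rfl⟩
          · exact ⟨some (⟨x, hx, hxd⟩, r.2), hmem_Jel_some.mpr hxa,
              some (⟨y, hy, hyd⟩, r.2), hmem_Jel_some.mpr hyb,
              ⟨hzc, fun _ => Or.inl ⟨le_rfl, rfl⟩⟩⟩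
    · rintro ⟨u, hu, v, hv, hc⟩
      cases u with
      | none =>
        have hida := hmem_Jel_none.mp hu
        cases v with
        | none =>
          cases w with
          | none =>
            exact hmem_Jel_none.mpr
              (((NA.ide_comp (NA.ide : α)).symm.le).trans
                (hcomp_mono hida (hmem_Jel_none.mp hv)))
          | some r => exact absurd hc (by simp [NA.Cyc])
        | some q =>
          have hqb := hmem_Jel_some.mp hv
          cases w with
          | none => exact absurd hc (by simp [NA.Cyc])
          | some r =>
            have hqr : q = r := hc
            cases hqr
            exact hmem_Jel_some.mpr
              (((NA.ide_comp q.1.1).symm.le).trans (hcomp_mono hida hqb))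
      | some p =>
        have hpa := hmem_Jel_some.mp hu
        cases v with
        | none =>
          have hidb := hmem_Jel_none.mp hv
          cases w with
          | none => exact absurd hc (by simp [NA.Cyc])
          | some r =>
            have hpr : p = r := hc
            cases hpr
            exact hmem_Jel_some.mpr
              (((NA.comp_ide p.1.1).symm.le).trans (hcomp_mono hpa hidb))
        | some q =>
          have hqb := hmem_Jel_some.mp hv
          cases w with
          | none =>
            have hpq : p = q := hc
            cases hpq
            exact hmem_Jel_none.mpr
              ((hide_le_comp_self hsym hint p.1.2.1).trans (hcomp_mono hpa hqb))
          | some r =>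
            exact hmem_Jel_some.mpr (hc.1.trans (hcomp_mono hpa hqb))
  · -- the atom characterization
    intro x y z k hx hy hz
    constructor
    · rintro ⟨u, hu, v, hv, hc⟩
      cases u with
      | none => exact absurd (hmem_Jel_none.mp hu) (hdivatom_not_ide_le hint hx)
      | some p =>
        cases v with
        | none => exact absurd (hmem_Jel_none.mp hv) (hdivatom_not_ide_le hint hy)
        | some q =>
          exact hc.1.trans (hcomp_mono (hmem_Jel_some.mp hu) (hmem_Jel_some.mp hv))
    · intro h
      exact ⟨some (⟨x, hx⟩, k), hmem_Jel_some.mpr le_rfl,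
        some (⟨y, hy⟩, k), hmem_Jel_some.mpr le_rfl,
        ⟨h, fun _ => Or.inl ⟨le_rfl, rfl⟩⟩⟩
end

section
/- Assume A is a special extension of E (finite symmetric integral relation algebras). Then for every n ∈ ω, the set B_n = {1'} ∪ {x^(i) : x a diversity atom of A, i < n} ∪ {J(a,n) : a a diversity atom of E} is the set of atoms of a (finite) subalgebra of C_E(A); that is, the product of any two elements of B_n is a join of elements of B_n. -/
universe u v

namespace NA
set_option linter.unusedSectionVars false

variable {α : Type} [RA α] [Fintype α]

lemma comp_mono {x x' y y' : α} (hx : x ≤ x') (hy : y ≤ y') :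
    comp x y ≤ comp x' y' := by
  have h1 : comp x y ≤ comp x' y := by
    calc comp x y ≤ comp x y ⊔ comp x' y := le_sup_left
      _ = comp (x ⊔ x') y := (sup_comp x x' y).symm
      _ = comp x' y := by rw [sup_eq_right.mpr hx]
  have h2 : comp x' y ≤ comp x' y' := by
    calc comp x' y ≤ comp x' y ⊔ comp x' y' := le_sup_left
      _ = comp x' (y ⊔ y') := (comp_sup x' y y').symm
      _ = comp x' y' := by rw [sup_eq_right.mpr hy]
  exact h1.trans h2

lemma exists_atom_le' {t : α} (h : t ≠ ⊥) : ∃ z : α, IsAtom z ∧ z ≤ t :=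
  (IsAtomic.eq_bot_or_exists_atom_le t).resolve_left h

lemma atom_le_of_inf_ne {z t : α} (hz : IsAtom z) (h : z ⊓ t ≠ ⊥) : z ≤ t := by
  by_contra hle
  have hlt : z ⊓ t < z :=
    lt_of_le_of_ne inf_le_left (fun h' => hle (inf_eq_left.mp h'))
  exact h (hz.2 _ hlt)

lemma sub_inf_mem (E : Subalgebra α) {x y : α} (hx : x ∈ E.carrier)
    (hy : y ∈ E.carrier) : x ⊓ y ∈ E.carrier := by
  have := E.compl_mem _ (E.sup_mem _ (E.compl_mem x hx) _ (E.compl_mem y hy))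
  simpa using this

lemma eatom_le {E : Subalgebra α} {c t : α} (hc : E.AtomOf c) (ht : t ∈ E.carrier)
    (h : c ⊓ t ≠ ⊥) : c ≤ t := by
  rcases hc.2.2 _ (sub_inf_mem E hc.1 ht) inf_le_left with h0 | h0
  · exact absurd h0 h
  · exact inf_eq_left.mp h0

lemma div_mem (E : Subalgebra α) : (div : α) ∈ E.carrier :=
  E.compl_mem _ E.ide_mem

lemma cov_div {cov : α → α} {E : Subalgebra α} (hcov : CoverMap E cov) {x : α}
    (hx : DivAtom x) : E.DivAtomOf (cov x) := by
  obtain ⟨h1, h2⟩ := hcov x hx.1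
  refine ⟨h1, eatom_le h1 (div_mem E) ?_⟩
  intro h
  have hle : x ≤ cov x ⊓ div := le_inf h2 hx.2
  rw [h] at hle
  exact hx.1.1 (le_bot_iff.mp hle)

lemma cov_eq {cov : α → α} {E : Subalgebra α} (hcov : CoverMap E cov) {x a : α}
    (hx : IsAtom x) (ha : E.AtomOf a) (hxa : x ≤ a) : cov x = a := by
  obtain ⟨h1, h2⟩ := hcov x hx
  have hne : cov x ⊓ a ≠ ⊥ := by
    intro h
    have hle : x ≤ cov x ⊓ a := le_inf h2 hxa
    rw [h] at hle
    exact hx.1 (le_bot_iff.mp hle)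
  have hle : cov x ≤ a := eatom_le h1 ha.1 hne
  rcases ha.2.2 _ h1.1 hle with h0 | h0
  · exact absurd h0 h1.2.1
  · exact h0

lemma not_ide_le (hint : Integral α) {c : α} (hcd : c ≤ (div : α)) :
    ¬ (ide : α) ≤ c := by
  intro hide
  have h2 : (ide : α) ≤ ide ⊓ (div : α) := le_inf le_rfl (hide.trans hcd)
  have h3 : (ide : α) ⊓ (div : α) = ⊥ := by simp [div]
  rw [h3] at h2
  exact hint.1 (le_bot_iff.mp h2)

lemma exists_right {E : Subalgebra α} (hsym : Symmetric α) (hspec : SpecialExt E)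
    {a x z : α} (ha : E.DivAtomOf a) (haa : a ≤ comp a a)
    (hx : IsAtom x) (hxa : x ≤ a) (hz : IsAtom z) (hza : z ≤ a) :
    ∃ y : α, IsAtom y ∧ y ≤ a ∧ z ≤ comp x y := by
  have h1 : comp x z ⊓ a ≠ ⊥ := hspec.2 a ha haa x z hx hz hxa hza
  obtain ⟨y, hy, hyle⟩ := exists_atom_le' h1
  refine ⟨y, hy, hyle.trans inf_le_right, ?_⟩
  have h2 : comp x z ⊓ y ≠ ⊥ := by
    intro h
    have : y ≤ comp x z ⊓ y := le_inf (hyle.trans inf_le_left) le_rfl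
    rw [h] at this
    exact hy.1 (le_bot_iff.mp this)
  have h3 : comp x y ⊓ z ≠ ⊥ := by
    intro h
    have := (peirce1 x y z).mp h
    rw [hsym x] at this
    exact h2 this
  rw [inf_comm] at h3
  exact atom_le_of_inf_ne hz h3

lemma exists_left {E : Subalgebra α} (hsym : Symmetric α) (hspec : SpecialExt E)
    {a y z : α} (ha : E.DivAtomOf a) (haa : a ≤ comp a a)
    (hy : IsAtom y) (hya : y ≤ a) (hz : IsAtom z) (hza : z ≤ a) :
    ∃ x : α, IsAtom x ∧ x ≤ a ∧ z ≤ comp x y := by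
  have h1 : comp z y ⊓ a ≠ ⊥ := hspec.2 a ha haa z y hz hy hza hya
  obtain ⟨x, hx, hxle⟩ := exists_atom_le' h1
  refine ⟨x, hx, hxle.trans inf_le_right, ?_⟩
  have h2 : comp z y ⊓ x ≠ ⊥ := by
    intro h
    have : x ≤ comp z y ⊓ x := le_inf (hxle.trans inf_le_left) le_rfl
    rw [h] at this
    exact hx.1 (le_bot_iff.mp this)
  have h3 : comp x y ⊓ z ≠ ⊥ := by
    intro h
    have := (peirce2 x y z).mp h
    rw [hsym y] at this
    exact h2 this
  rw [inf_comm] at h3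
  exact atom_le_of_inf_ne hz h3

lemma cyc_nn {cov : α → α} {w : CAtom α} : Cyc cov none none w ↔ w = none := by
  cases w <;> simp [Cyc]

lemma cyc_ns {cov : α → α} {p : DAt α × ℕ} {w : CAtom α} :
    Cyc cov none (some p) w ↔ w = some p := by
  cases w <;> simp [Cyc, eq_comm]

lemma cyc_sn {cov : α → α} {p : DAt α × ℕ} {w : CAtom α} :
    Cyc cov (some p) none w ↔ w = some p := by
  cases w <;> simp [Cyc, eq_comm]

lemma cyc_ss {cov : α → α} {p q r : DAt α × ℕ} :
    Cyc cov (some p) (some q) (some r) ↔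
      (r.1.1 ≤ comp p.1.1 q.1.1 ∧
        (cov p.1.1 = cov q.1.1 ∧ cov q.1.1 = cov r.1.1 → T3 p.2 q.2 r.2)) :=
  Iff.rfl

lemma ccomp_none_left {cov : α → α} (v : Set (CAtom α)) :
    Ccomp cov ({none} : Set (CAtom α)) v = v := by
  ext w
  constructor
  · rintro ⟨u', hu', v', hv', hc⟩
    have : u' = none := hu'
    subst this
    cases v' with
    | none => rw [cyc_nn.mp hc]; exact hv'
    | some p => rw [cyc_ns.mp hc]; exact hv'
  · intro hw
    refine ⟨none, rfl, w, hw, ?_⟩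
    cases w with
    | none => exact cyc_nn.mpr rfl
    | some p => exact cyc_ns.mpr rfl

lemma ccomp_none_right {cov : α → α} (u : Set (CAtom α)) :
    Ccomp cov u ({none} : Set (CAtom α)) = u := by
  ext w
  constructor
  · rintro ⟨u', hu', v', hv', hc⟩
    have : v' = none := hv'
    subst this
    cases u' with
    | none => rw [cyc_nn.mp hc]; exact hu'
    | some p => rw [cyc_sn.mp hc]; exact hu'
  · intro hw
    refine ⟨w, hw, none, rfl, ?_⟩
    cases w with
    | none => exact cyc_nn.mpr rfl
    | some p => exact cyc_sn.mpr rfl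

lemma mem_jel_some {a : α} {n : ℕ} {p : DAt α × ℕ} :
    (some p : CAtom α) ∈ Jel a n ↔ p.1.1 ≤ a ∧ n ≤ p.2 := by
  simp only [Jel, Set.mem_setOf_eq]
  constructor
  · rintro (⟨q, hq, h⟩ | ⟨h, _⟩)
    · obtain rfl := Option.some.inj hq
      exact h
    · exact nomatch h
  · intro h
    exact Or.inl ⟨p, rfl, h⟩

lemma none_not_mem_jel (hint : Integral α) {a : α} (had : a ≤ (div : α)) {n : ℕ} :
    (none : CAtom α) ∉ Jel a n := by
  intro h
  simp only [Jel, Set.mem_setOf_eq] at h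
  rcases h with ⟨p, hp, _⟩ | ⟨_, hide⟩
  · exact nomatch hp
  · exact not_ide_le hint had hide

lemma mem_bset {E : Subalgebra α} {n : ℕ} {s : Set (CAtom α)} :
    s ∈ Bset E n ↔ s = ({none} : Set (CAtom α)) ∨
      (∃ (x : DAt α) (i : ℕ), i < n ∧ s = {some (x, i)}) ∨
      (∃ a : α, E.DivAtomOf a ∧ s = Jel a n) := by
  simp [Bset, Set.mem_union, Set.mem_setOf_eq, or_assoc]

lemma branch_neq {E : Subalgebra α} {cov : α → α} (hint : Integral α)
    (hcov : CoverMap E cov) {n : ℕ} {u v : Set (CAtom α)}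
    (x y : DAt α) (i j : ℕ) (hxu : (some (x, i) : CAtom α) ∈ u)
    (hyv : (some (y, j) : CAtom α) ∈ v) {c : α} (hc : E.AtomOf c)
    (hcd : c ≤ (div : α))
    (hne : ¬(cov x.1 = cov y.1 ∧ cov y.1 = c)) (hcc : c ≤ comp x.1 y.1) :
    Jel c n ⊆ Ccomp cov u v := by
  intro w hw
  simp only [Jel, Set.mem_setOf_eq] at hw
  rcases hw with ⟨p, hp, hpa, hpn⟩ | ⟨hwn, hide⟩
  · subst hp
    refine ⟨some (x, i), hxu, some (y, j), hyv, cyc_ss.mpr ⟨hpa.trans hcc, ?_⟩⟩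
    intro hcovs
    have hcz : cov p.1.1 = c := cov_eq hcov p.1.2.1 hc hpa
    exact absurd ⟨hcovs.1, hcovs.2.trans hcz⟩ hne
  · exact absurd hide (not_ide_le hint hcd)

lemma branch_flex {E : Subalgebra α} {cov : α → α} (hsym : Symmetric α)
    (hint : Integral α) (hspec : SpecialExt E) {n : ℕ} {u : Set (CAtom α)}
    (x : DAt α) (i : ℕ) (hxu : (some (x, i) : CAtom α) ∈ u)
    {a : α} (ha : E.DivAtomOf a) (hxa : x.1 ≤ a) (haa : a ≤ comp a a)
    (hchoice : ∀ k', n ≤ k' → ∃ j', n ≤ j' ∧ T3 i j' k') :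
    Jel a n ⊆ Ccomp cov u (Jel a n) := by
  intro w hw
  simp only [Jel, Set.mem_setOf_eq] at hw
  rcases hw with ⟨p, hp, hpa, hpn⟩ | ⟨hwn, hide⟩
  · subst hp
    obtain ⟨j', hj', hT⟩ := hchoice p.2 hpn
    obtain ⟨y, hy, hya, hzc⟩ := exists_right hsym hspec ha haa x.2.1 hxa p.1.2.1 hpa
    exact ⟨some (x, i), hxu, some (⟨y, hy, hya.trans ha.2⟩, j'),
      mem_jel_some.mpr ⟨hya, hj'⟩, cyc_ss.mpr ⟨hzc, fun _ => hT⟩⟩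
  · exact absurd hide (not_ide_le hint ha.2)

lemma branch_flex_left {E : Subalgebra α} {cov : α → α} (hsym : Symmetric α)
    (hint : Integral α) (hspec : SpecialExt E) {n : ℕ} {v : Set (CAtom α)}
    (y : DAt α) (j : ℕ) (hyv : (some (y, j) : CAtom α) ∈ v)
    {a : α} (ha : E.DivAtomOf a) (hya : y.1 ≤ a) (haa : a ≤ comp a a)
    (hchoice : ∀ k', n ≤ k' → ∃ i', n ≤ i' ∧ T3 i' j k') :
    Jel a n ⊆ Ccomp cov (Jel a n) v := by
  intro w hw
  simp only [Jel, Set.mem_setOf_eq] at hw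
  rcases hw with ⟨p, hp, hpa, hpn⟩ | ⟨hwn, hide⟩
  · subst hp
    obtain ⟨i', hi', hT⟩ := hchoice p.2 hpn
    obtain ⟨x, hx, hxa, hzc⟩ := exists_left hsym hspec ha haa y.2.1 hya p.1.2.1 hpa
    exact ⟨some (⟨x, hx, hxa.trans ha.2⟩, i'), mem_jel_some.mpr ⟨hxa, hi'⟩,
      some (y, j), hyv, cyc_ss.mpr ⟨hzc, fun _ => hT⟩⟩
  · exact absurd hide (not_ide_le hint ha.2)

end NA

namespace NA
set_option linter.unusedSectionVars false

variable {α : Type} [RA α] [Fintype α]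

lemma core {E : Subalgebra α} {cov : α → α} (hsym : Symmetric α)
    (hint : Integral α) (hcov : CoverMap E cov) (hspec : SpecialExt E)
    {n : ℕ} {u v : Set (CAtom α)} (x y z : DAt α) (i j : ℕ)
    (hxu : (some (x, i) : CAtom α) ∈ u) (hyv : (some (y, j) : CAtom α) ∈ v)
    (hzc : z.1 ≤ comp x.1 y.1)
    (flex : (cov x.1 = cov y.1 ∧ cov y.1 = cov z.1) →
      cov z.1 ≤ comp (cov x.1) (cov y.1) →
      Jel (cov z.1) n ⊆ Ccomp cov u v) :
    Jel (cov z.1) n ⊆ Ccomp cov u v := by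
  have hax : E.DivAtomOf (cov x.1) := cov_div hcov x.2
  have hby : E.DivAtomOf (cov y.1) := cov_div hcov y.2
  have hcz : E.DivAtomOf (cov z.1) := cov_div hcov z.2
  have hcab : cov z.1 ≤ comp (cov x.1) (cov y.1) := by
    apply eatom_le hcz.1 (E.comp_mem _ hax.1.1 _ hby.1.1)
    intro hbot
    have hle : z.1 ≤ cov z.1 ⊓ comp (cov x.1) (cov y.1) :=
      le_inf (hcov z.1 z.2.1).2
        (hzc.trans (comp_mono (hcov x.1 x.2.1).2 (hcov y.1 y.2.1).2))
    rw [hbot] at hle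
    exact z.2.1.1 (le_bot_iff.mp hle)
  by_cases habc : cov x.1 = cov y.1 ∧ cov y.1 = cov z.1
  · exact flex habc hcab
  · have hcc : cov z.1 ≤ comp x.1 y.1 :=
      hspec.1 _ _ _ hax hby hcz habc hcab x.1 y.1 x.2.1 y.2.1
        (hcov x.1 x.2.1).2 (hcov y.1 y.2.1).2
    exact branch_neq hint hcov x y i j hxu hyv hcz.1 hcz.2 habc hcc

lemma jel_subset {E : Subalgebra α} {cov : α → α} (hsym : Symmetric α)
    (hint : Integral α) (hcov : CoverMap E cov) (hspec : SpecialExt E)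
    {n : ℕ} {u v : Set (CAtom α)} (hu : u ∈ Bset E n) (hv : v ∈ Bset E n)
    (z : DAt α) (k : ℕ) (hk : n ≤ k)
    (hw : (some (z, k) : CAtom α) ∈ Ccomp cov u v) :
    Jel (cov z.1) n ⊆ Ccomp cov u v := by
  obtain ⟨u', hu', v', hv', hc⟩ := hw
  rcases mem_bset.mp hu with rfl | ⟨x₀, i₀, hi₀, rfl⟩ | ⟨a, ha, rfl⟩
  · -- u = {none}
    have hun : u' = none := hu'
    subst hun
    cases v' with
    | none => exact absurd (cyc_nn.mp hc) (by simp)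
    | some q =>
      have hq : ((z, k) : DAt α × ℕ) = q := Option.some.inj (cyc_ns.mp hc)
      subst hq
      rcases mem_bset.mp hv with rfl | ⟨x₁, i₁, hi₁, rfl⟩ | ⟨b, hb, rfl⟩
      · exact absurd hv' (by simp)
      · exfalso
        simp only [Set.mem_singleton_iff, Option.some.injEq, Prod.mk.injEq] at hv'
        omega
      · have hzb : z.1 ≤ b := (mem_jel_some.mp hv').1
        have hce : cov z.1 = b := cov_eq hcov z.2.1 hb.1 hzb
        rw [hce, ccomp_none_left]
  · -- u = {some (x₀, i₀)} with i₀ < n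
    have hun : u' = some (x₀, i₀) := hu'
    subst hun
    rcases mem_bset.mp hv with rfl | ⟨y₀, j₀, hj₀, rfl⟩ | ⟨b, hb, rfl⟩
    · -- v = {none}
      have hvn : v' = none := hv'
      subst hvn
      exfalso
      have hq : ((z, k) : DAt α × ℕ) = (x₀, i₀) := Option.some.inj (cyc_sn.mp hc)
      have : k = i₀ := congrArg Prod.snd hq
      omega
    · -- v = {some (y₀, j₀)} with j₀ < n
      have hvn : v' = some (y₀, j₀) := hv'
      subst hvn
      obtain ⟨hzc, hT⟩ := cyc_ss.mp hc
      apply core hsym hint hcov hspec x₀ y₀ z i₀ j₀ hu' hv' hzc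
      intro habc _
      exfalso
      have hT3 : T3 i₀ j₀ k := hT habc
      simp only [T3] at hT3
      omega
    · -- v = Jel b n
      cases v' with
      | none => exact absurd hv' (none_not_mem_jel hint hb.2)
      | some q =>
        obtain ⟨y₁, j₁⟩ := q
        obtain ⟨hyb, hj₁⟩ := mem_jel_some.mp hv'
        obtain ⟨hzc, hT⟩ := cyc_ss.mp hc
        apply core hsym hint hcov hspec x₀ y₁ z i₀ j₁ hu' hv' hzc
        intro habc hcab
        have e2 : cov y₁.1 = b := cov_eq hcov y₁.2.1 hb.1 hyb
        have e1 : cov x₀.1 = b := habc.1.trans e2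
        have e3 : cov z.1 = b := habc.2.symm.trans e2
        rw [e1, e2, e3] at hcab
        rw [e3]
        apply branch_flex hsym hint hspec x₀ i₀ hu' hb ?_ hcab ?_
        · exact (hcov x₀.1 x₀.2.1).2.trans (le_of_eq e1)
        · intro k' hk'
          exact ⟨k', hk', Or.inl ⟨by omega, rfl⟩⟩
  · -- u = Jel a n
    cases u' with
    | none => exact absurd hu' (none_not_mem_jel hint ha.2)
    | some q =>
      obtain ⟨x₁, i₁⟩ := q
      obtain ⟨hxa, hi₁⟩ := mem_jel_some.mp hu'
      rcases mem_bset.mp hv with rfl | ⟨y₀, j₀, hj₀, rfl⟩ | ⟨b, hb, rfl⟩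
      · -- v = {none}
        have hvn : v' = none := hv'
        subst hvn
        have hq : ((z, k) : DAt α × ℕ) = (x₁, i₁) := Option.some.inj (cyc_sn.mp hc)
        have hz1 : z = x₁ := congrArg Prod.fst hq
        have hza : z.1 ≤ a := by rw [hz1]; exact hxa
        have hce : cov z.1 = a := cov_eq hcov z.2.1 ha.1 hza
        rw [hce, ccomp_none_right]
      · -- v = {some (y₀, j₀)} with j₀ < n
        have hvn : v' = some (y₀, j₀) := hv'
        subst hvn
        obtain ⟨hzc, hT⟩ := cyc_ss.mp hc
        apply core hsym hint hcov hspec x₁ y₀ z i₁ j₀ hu' hv' hzc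
        intro habc hcab
        have e1 : cov x₁.1 = a := cov_eq hcov x₁.2.1 ha.1 hxa
        have e2 : cov y₀.1 = a := habc.1.symm.trans e1
        have e3 : cov z.1 = a := habc.2.symm.trans e2
        rw [e1, e2, e3] at hcab
        rw [e3]
        apply branch_flex_left hsym hint hspec y₀ j₀ hv' ha ?_ hcab ?_
        · exact (hcov y₀.1 y₀.2.1).2.trans (le_of_eq e2)
        · intro k' hk'
          exact ⟨k', hk', Or.inr (Or.inl ⟨by omega, rfl⟩)⟩
      · -- v = Jel b n
        cases v' with
        | none => exact absurd hv' (none_not_mem_jel hint hb.2)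
        | some q =>
          obtain ⟨y₁, j₁⟩ := q
          obtain ⟨hyb, hj₁⟩ := mem_jel_some.mp hv'
          obtain ⟨hzc, hT⟩ := cyc_ss.mp hc
          apply core hsym hint hcov hspec x₁ y₁ z i₁ j₁ hu' hv' hzc
          intro habc hcab
          have e2 : cov y₁.1 = b := cov_eq hcov y₁.2.1 hb.1 hyb
          have e1 : cov x₁.1 = b := habc.1.trans e2
          have e3 : cov z.1 = b := habc.2.symm.trans e2
          rw [e1, e2, e3] at hcab
          rw [e3]
          apply branch_flex hsym hint hspec x₁ i₁ hu' hb ?_ hcab ?_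
          · exact (hcov x₁.1 x₁.2.1).2.trans (le_of_eq e1)
          · intro k' hk'
            rcases le_total i₁ k' with h | h
            · exact ⟨k', hk', Or.inl ⟨h, rfl⟩⟩
            · exact ⟨i₁, hi₁, Or.inr (Or.inr ⟨h, rfl⟩)⟩

lemma key {E : Subalgebra α} {cov : α → α} (hsym : Symmetric α)
    (hint : Integral α) (hcov : CoverMap E cov) (hspec : SpecialExt E)
    {n : ℕ} {u v : Set (CAtom α)} (hu : u ∈ Bset E n) (hv : v ∈ Bset E n) :
    ∀ w ∈ Ccomp cov u v, ∃ b ∈ Bset E n, w ∈ b ∧ b ⊆ Ccomp cov u v := by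
  intro w hw
  match w with
  | none =>
    exact ⟨{none}, mem_bset.mpr (Or.inl rfl), Set.mem_singleton _,
      Set.singleton_subset_iff.mpr hw⟩
  | some (z, k) =>
    by_cases hk : k < n
    · exact ⟨{some (z, k)}, mem_bset.mpr (Or.inr (Or.inl ⟨z, k, hk, rfl⟩)),
        Set.mem_singleton _, Set.singleton_subset_iff.mpr hw⟩
    · refine ⟨Jel (cov z.1) n,
        mem_bset.mpr (Or.inr (Or.inr ⟨cov z.1, cov_div hcov z.2, rfl⟩)), ?_,
        jel_subset hsym hint hcov hspec hu hv z k (le_of_not_gt hk) hw⟩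
      exact mem_jel_some.mpr ⟨(hcov z.1 z.2.1).2, le_of_not_gt hk⟩

end NA


/-- If A is a special extension of E, then for every n the set
B_n = {1'} ∪ {x^(i) : i < n} ∪ {J(a,n) : a a diversity atom of E} is the atom
set of a subalgebra of C_E(A): any product of two of its elements is a join of
elements of B_n. -/
theorem stmt8 {α : Type} [RA α] [Fintype α]
    (hsym : NA.Symmetric α) (hint : NA.Integral α)
    (E : NA.Subalgebra α) (cov : α → α) (hcov : NA.CoverMap E cov)
    (hspec : NA.SpecialExt E) (n : ℕ) :
    ∀ u ∈ NA.Bset E n, ∀ v ∈ NA.Bset E n,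
      ∃ S ⊆ NA.Bset E n, NA.Ccomp cov u v = ⋃₀ S := by
  intro u hu v hv
  refine ⟨{b | b ∈ NA.Bset E n ∧ b ⊆ NA.Ccomp cov u v}, fun b hb => hb.1, ?_⟩
  ext w
  simp only [Set.mem_sUnion, Set.mem_setOf_eq]
  constructor
  · intro hw
    obtain ⟨b, hb, hwb, hsub⟩ := NA.key hsym hint hcov hspec hu hv w hw
    exact ⟨b, ⟨hb, hsub⟩, hwb⟩
  · rintro ⟨b, ⟨_, hsub⟩, hwb⟩
    exact hsub hwb
end
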